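/- arXiv:0910.5426 — 2 statements merged into one kernel-verified Lean document; each statement's English description precedes it below -/
import Mathlib

section
/- (The curve where U changes sign is an attractor.) Let c=(c1,c2):ℝ²→ℝ² be a C¹ cost field, let a=(a1,a2), b=(b1,b2) with a1≤b1 and a2≤b2, and let L be a monotone path from a to b with hypograph function h_L. Assume U(x,y)≥0 for almost every (x,y)∈R_ab with y>h_L(x), and U(x,y)≤0 for almost every (x,y)∈R_ab with y<h_L(x) (so the curve L separates the rectangle into a region above it where U≥0 and a region below it where U≤0). Then cost(L) ≤ cost(γ) for every monotone path γ from a to b; i.e., following the separating curve L is optimal. -/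
open MeasureTheory Set intervalIntegral

/-- A monotone path in the plane: a continuous, piecewise-C¹ map
`p : [0,1] → ℝ²` whose two coordinate derivatives (given by `d`, and valid
outside a finite exceptional set `exc`) are nonnegative. -/
structure MonoPath where
  p : ℝ → ℝ × ℝ
  d : ℝ → ℝ × ℝ
  exc : Set ℝ
  exc_finite : exc.Finite
  cont : ContinuousOn p (Icc 0 1)
  deriv_fst : ∀ t ∈ Icc (0:ℝ) 1 \ exc, HasDerivAt (fun u => (p u).1) (d t).1 t
  deriv_snd : ∀ t ∈ Icc (0:ℝ) 1 \ exc, HasDerivAt (fun u => (p u).2) (d t).2 t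
  d_fst_nonneg : ∀ t ∈ Icc (0:ℝ) 1, 0 ≤ (d t).1
  d_snd_nonneg : ∀ t ∈ Icc (0:ℝ) 1, 0 ≤ (d t).2

/-- The cost of a monotone path under the cost field `c = (c1, c2)`:
`∫₀¹ (c1(γ(t)) γ₁'(t) + c2(γ(t)) γ₂'(t)) dt`. -/
noncomputable def pathCost (c : ℝ × ℝ → ℝ × ℝ) (γ : MonoPath) : ℝ :=
  ∫ t in (0:ℝ)..1, ((c (γ.p t)).1 * (γ.d t).1 + (c (γ.p t)).2 * (γ.d t).2)

/-- `γ` is a monotone path from `a` to `b`, staying in the rectangle `[a₁,b₁]×[a₂,b₂]`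
(which is `Set.Icc a b` for the product order on `ℝ × ℝ`). -/
def IsMonoPathFromTo (γ : MonoPath) (a b : ℝ × ℝ) : Prop :=
  γ.p 0 = a ∧ γ.p 1 = b ∧ ∀ t ∈ Icc (0:ℝ) 1, γ.p t ∈ Icc a b

/-- `U(x) = ∂c1/∂x2 (x) − ∂c2/∂x1 (x)`. -/
noncomputable def Ucurl (c : ℝ × ℝ → ℝ × ℝ) (x : ℝ × ℝ) : ℝ :=
  deriv (fun y => (c (x.1, y)).1) x.2 - deriv (fun s => (c (s, x.2)).2) x.1

/-- Hypograph function of a monotone path: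
`h_γ(x) = sup { γ₂(t) : t ∈ [0,1], γ₁(t) ≤ x }`. -/
noncomputable def hypoFun (γ : MonoPath) (x : ℝ) : ℝ :=
  sSup ((fun t => (γ.p t).2) '' {t | t ∈ Icc (0:ℝ) 1 ∧ (γ.p t).1 ≤ x})

/-- Hypograph region of a monotone path from `a` to `b`:
`A_γ = {(x,y) : a₁ < x < b₁, a₂ < y < h_γ(x)}`. -/
def hypoRegion (γ : MonoPath) (a b : ℝ × ℝ) : Set (ℝ × ℝ) :=
  {q | a.1 < q.1 ∧ q.1 < b.1 ∧ a.2 < q.2 ∧ q.2 < hypoFun γ q.1}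


section AuxProof

private lemma ftc_finset : ∀ (n : ℕ) (E : Finset ℝ), E.card ≤ n → ∀ (f g : ℝ → ℝ) (s t : ℝ),
    s ≤ t → ContinuousOn f (Icc s t) → (∀ u ∈ Ioo s t, u ∉ E → HasDerivAt f (g u) u) →
    IntervalIntegrable g volume s t → ∫ u in s..t, g u = f t - f s := by
  intro n
  induction n with
  | zero =>
    intro E hcard f g s t hst hf hd hi
    have hE : E = ∅ := Finset.card_eq_zero.1 (Nat.le_zero.1 hcard)
    exact integral_eq_sub_of_hasDerivAt_of_le hst hf
      (fun u hu => hd u hu (by simp [hE])) hi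
  | succ n ih =>
    intro E hcard f g s t hst hf hd hi
    by_cases hE : ∃ e ∈ E, e ∈ Ioo s t
    · obtain ⟨e, heE, hes, het⟩ := hE
      have hcard' : (E.erase e).card ≤ n := by
        have := Finset.card_erase_of_mem heE; omega
      have h1 : ∫ u in s..e, g u = f e - f s := by
        refine ih (E.erase e) hcard' f g s e (le_of_lt hes)
          (hf.mono (Icc_subset_Icc le_rfl (le_of_lt het))) ?_
          (hi.mono_set (by rw [uIcc_of_le hes.le, uIcc_of_le hst]; exact Icc_subset_Icc le_rfl het.le))
        intro u hu hu'
        refine hd u ⟨hu.1, hu.2.trans het⟩ ?_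
        intro huE
        exact hu' (Finset.mem_erase.2 ⟨ne_of_lt hu.2, huE⟩)
      have h2 : ∫ u in e..t, g u = f t - f e := by
        refine ih (E.erase e) hcard' f g e t (le_of_lt het)
          (hf.mono (Icc_subset_Icc (le_of_lt hes) le_rfl)) ?_
          (hi.mono_set (by rw [uIcc_of_le het.le, uIcc_of_le hst]; exact Icc_subset_Icc hes.le le_rfl))
        intro u hu hu'
        refine hd u ⟨hes.trans hu.1, hu.2⟩ ?_
        intro huE
        exact hu' (Finset.mem_erase.2 ⟨ne_of_gt hu.1, huE⟩)
      have hadd := integral_add_adjacent_intervals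
        (hi.mono_set (by rw [uIcc_of_le hes.le, uIcc_of_le hst]; exact Icc_subset_Icc le_rfl het.le))
        (hi.mono_set (by rw [uIcc_of_le het.le, uIcc_of_le hst]; exact Icc_subset_Icc hes.le le_rfl))
      rw [← hadd, h1, h2]; ring
    · push_neg at hE
      exact integral_eq_sub_of_hasDerivAt_of_le hst hf
        (fun u hu => hd u hu (fun huE => (hE u huE) hu)) hi

private lemma ii_finset : ∀ (n : ℕ) (E : Finset ℝ), E.card ≤ n → ∀ (f g : ℝ → ℝ) (s t : ℝ),
    s ≤ t → ContinuousOn f (Icc s t) → (∀ u ∈ Ioo s t, u ∉ E → HasDerivAt f (g u) u) →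
    (∀ u ∈ Ioo s t, u ∉ E → 0 ≤ g u) → IntervalIntegrable (deriv f) volume s t := by
  intro n
  induction n with
  | zero =>
    intro E hcard f g s t hst hf hd h0
    have hE : E = ∅ := Finset.card_eq_zero.1 (Nat.le_zero.1 hcard)
    subst hE
    refine intervalIntegrable_deriv_of_nonneg (by rwa [uIcc_of_le hst]) ?_ ?_
    · rw [min_eq_left hst, max_eq_right hst]
      intro u hu
      exact ((hd u hu (by simp)).deriv ▸ (hd u hu (by simp)))
    · rw [min_eq_left hst, max_eq_right hst]
      intro u hu
      exact (hd u hu (by simp)).deriv ▸ h0 u hu (by simp)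
  | succ n ih =>
    intro E hcard f g s t hst hf hd h0
    by_cases hE : ∃ e ∈ E, e ∈ Ioo s t
    · obtain ⟨e, heE, hes, het⟩ := hE
      have hcard' : (E.erase e).card ≤ n := by
        have := Finset.card_erase_of_mem heE; omega
      have h1 : IntervalIntegrable (deriv f) volume s e := by
        refine ih (E.erase e) hcard' f g s e (le_of_lt hes)
          (hf.mono (Icc_subset_Icc le_rfl (le_of_lt het))) ?_ ?_
        · intro u hu hu'
          exact hd u ⟨hu.1, hu.2.trans het⟩
            (fun huE => hu' (Finset.mem_erase.2 ⟨ne_of_lt hu.2, huE⟩))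
        · intro u hu hu'
          exact h0 u ⟨hu.1, hu.2.trans het⟩
            (fun huE => hu' (Finset.mem_erase.2 ⟨ne_of_lt hu.2, huE⟩))
      have h2 : IntervalIntegrable (deriv f) volume e t := by
        refine ih (E.erase e) hcard' f g e t (le_of_lt het)
          (hf.mono (Icc_subset_Icc (le_of_lt hes) le_rfl)) ?_ ?_
        · intro u hu hu'
          exact hd u ⟨hes.trans hu.1, hu.2⟩
            (fun huE => hu' (Finset.mem_erase.2 ⟨ne_of_gt hu.1, huE⟩))
        · intro u hu hu'
          exact h0 u ⟨hes.trans hu.1, hu.2⟩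
            (fun huE => hu' (Finset.mem_erase.2 ⟨ne_of_gt hu.1, huE⟩))
      exact h1.trans h2
    · push_neg at hE
      refine intervalIntegrable_deriv_of_nonneg (by rwa [uIcc_of_le hst]) ?_ ?_
      · rw [min_eq_left hst, max_eq_right hst]
        intro u hu
        have h := hd u hu (fun huE => (hE u huE) hu)
        exact h.deriv ▸ h
      · rw [min_eq_left hst, max_eq_right hst]
        intro u hu
        exact (hd u hu (fun huE => (hE u huE) hu)).deriv ▸ h0 u hu (fun huE => (hE u huE) hu)

lemma ftc_exc {E : Set ℝ} (hE : E.Finite) {f g : ℝ → ℝ} {s t : ℝ} (hst : s ≤ t)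
    (hf : ContinuousOn f (Icc s t)) (hd : ∀ u ∈ Ioo s t, u ∉ E → HasDerivAt f (g u) u)
    (hi : IntervalIntegrable g volume s t) : ∫ u in s..t, g u = f t - f s :=
  ftc_finset hE.toFinset.card hE.toFinset le_rfl f g s t hst hf
    (fun u hu hu' => hd u hu (fun h => hu' (hE.mem_toFinset.2 h))) hi

lemma ii_exc {E : Set ℝ} (hE : E.Finite) {f g : ℝ → ℝ} {s t : ℝ} (hst : s ≤ t)
    (hf : ContinuousOn f (Icc s t)) (hd : ∀ u ∈ Ioo s t, u ∉ E → HasDerivAt f (g u) u)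
    (h0 : ∀ u ∈ Ioo s t, u ∉ E → 0 ≤ g u) : IntervalIntegrable (deriv f) volume s t :=
  ii_finset hE.toFinset.card hE.toFinset le_rfl f g s t hst hf
    (fun u hu hu' => hd u hu (fun h => hu' (hE.mem_toFinset.2 h)))
    (fun u hu hu' => h0 u hu (fun h => hu' (hE.mem_toFinset.2 h)))


noncomputable def clampI (lo hi t : ℝ) : ℝ := max lo (min hi t)

lemma clampI_mem {lo hi : ℝ} (h : lo ≤ hi) (t : ℝ) : clampI lo hi t ∈ Icc lo hi :=
  ⟨le_max_left _ _, max_le h (min_le_left _ _)⟩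

lemma clampI_eq {lo hi t : ℝ} (ht : t ∈ Icc lo hi) : clampI lo hi t = t := by
  unfold clampI; rw [min_eq_right ht.2, max_eq_right ht.1]

lemma continuous_clampI (lo hi : ℝ) : Continuous (clampI lo hi) :=
  continuous_const.max (continuous_const.min continuous_id)

lemma monotone_clampI (lo hi : ℝ) : Monotone (clampI lo hi) :=
  fun _ _ hxy => max_le_max le_rfl (min_le_min le_rfl hxy)

noncomputable def MonoPath.f1 (γ : MonoPath) : ℝ → ℝ := fun t => (γ.p (clampI 0 1 t)).1
noncomputable def MonoPath.f2 (γ : MonoPath) : ℝ → ℝ := fun t => (γ.p (clampI 0 1 t)).2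

lemma MonoPath.f1_eq (γ : MonoPath) {t : ℝ} (ht : t ∈ Icc (0:ℝ) 1) : γ.f1 t = (γ.p t).1 := by
  unfold MonoPath.f1; rw [clampI_eq ht]

lemma MonoPath.f2_eq (γ : MonoPath) {t : ℝ} (ht : t ∈ Icc (0:ℝ) 1) : γ.f2 t = (γ.p t).2 := by
  unfold MonoPath.f2; rw [clampI_eq ht]

lemma MonoPath.continuous_f1 (γ : MonoPath) : Continuous γ.f1 :=
  (γ.cont.comp_continuous (continuous_clampI 0 1) (clampI_mem zero_le_one)).fst

lemma MonoPath.continuous_f2 (γ : MonoPath) : Continuous γ.f2 :=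
  (γ.cont.comp_continuous (continuous_clampI 0 1) (clampI_mem zero_le_one)).snd

lemma MonoPath.hasDerivAt_f1 (γ : MonoPath) {u : ℝ} (hu : u ∈ Ioo (0:ℝ) 1) (hu' : u ∉ γ.exc) :
    HasDerivAt γ.f1 ((γ.d u).1) u := by
  have h := γ.deriv_fst u ⟨Ioo_subset_Icc_self hu, hu'⟩
  refine h.congr_of_eventuallyEq ?_
  filter_upwards [isOpen_Ioo.mem_nhds hu] with v hv
  exact γ.f1_eq (Ioo_subset_Icc_self hv)

lemma MonoPath.hasDerivAt_f2 (γ : MonoPath) {u : ℝ} (hu : u ∈ Ioo (0:ℝ) 1) (hu' : u ∉ γ.exc) :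
    HasDerivAt γ.f2 ((γ.d u).2) u := by
  have h := γ.deriv_snd u ⟨Ioo_subset_Icc_self hu, hu'⟩
  refine h.congr_of_eventuallyEq ?_
  filter_upwards [isOpen_Ioo.mem_nhds hu] with v hv
  exact γ.f2_eq (Ioo_subset_Icc_self hv)

lemma MonoPath.deriv_f1_eq (γ : MonoPath) {u : ℝ} (hu : u ∈ Ioo (0:ℝ) 1) (hu' : u ∉ γ.exc) :
    deriv γ.f1 u = (γ.d u).1 := (γ.hasDerivAt_f1 hu hu').deriv

lemma MonoPath.deriv_f2_eq (γ : MonoPath) {u : ℝ} (hu : u ∈ Ioo (0:ℝ) 1) (hu' : u ∉ γ.exc) :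
    deriv γ.f2 u = (γ.d u).2 := (γ.hasDerivAt_f2 hu hu').deriv

lemma MonoPath.II_f1 (γ : MonoPath) : IntervalIntegrable (deriv γ.f1) volume 0 1 :=
  ii_exc γ.exc_finite zero_le_one γ.continuous_f1.continuousOn
    (fun u hu hu' => γ.hasDerivAt_f1 hu hu')
    (fun u hu _ => γ.d_fst_nonneg u (Ioo_subset_Icc_self hu))

lemma MonoPath.II_f2 (γ : MonoPath) : IntervalIntegrable (deriv γ.f2) volume 0 1 :=
  ii_exc γ.exc_finite zero_le_one γ.continuous_f2.continuousOn
    (fun u hu hu' => γ.hasDerivAt_f2 hu hu')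
    (fun u hu _ => γ.d_snd_nonneg u (Ioo_subset_Icc_self hu))

lemma MonoPath.ftc_f1 (γ : MonoPath) {s t : ℝ} (hs : s ∈ Icc (0:ℝ) 1) (ht : t ∈ Icc (0:ℝ) 1)
    (hst : s ≤ t) : ∫ u in s..t, deriv γ.f1 u = γ.f1 t - γ.f1 s :=
  ftc_exc γ.exc_finite hst (γ.continuous_f1.continuousOn)
    (fun u hu hu' => by
      have h := γ.hasDerivAt_f1 (Ioo_subset_Ioo hs.1 ht.2 hu) hu'
      exact (h.deriv ▸ h))
    (γ.II_f1.mono_set (by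
      rw [uIcc_of_le hst, uIcc_of_le zero_le_one]; exact Icc_subset_Icc hs.1 ht.2))

lemma MonoPath.ftc_f2 (γ : MonoPath) {s t : ℝ} (hs : s ∈ Icc (0:ℝ) 1) (ht : t ∈ Icc (0:ℝ) 1)
    (hst : s ≤ t) : ∫ u in s..t, deriv γ.f2 u = γ.f2 t - γ.f2 s :=
  ftc_exc γ.exc_finite hst (γ.continuous_f2.continuousOn)
    (fun u hu hu' => by
      have h := γ.hasDerivAt_f2 (Ioo_subset_Ioo hs.1 ht.2 hu) hu'
      exact (h.deriv ▸ h))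
    (γ.II_f2.mono_set (by
      rw [uIcc_of_le hst, uIcc_of_le zero_le_one]; exact Icc_subset_Icc hs.1 ht.2))

/-- a.e. every point of `Icc 0 1` is a good interior point. -/
lemma MonoPath.ae_good (γ : MonoPath) :
    ∀ᵐ u ∂(volume : Measure ℝ), u ∈ Icc (0:ℝ) 1 → u ∈ Ioo (0:ℝ) 1 \ γ.exc := by
  have hfin : ((γ.exc ∪ {0, 1} : Set ℝ)).Finite :=
    γ.exc_finite.union (Set.toFinite _)
  have h0 : (volume : Measure ℝ) (γ.exc ∪ {0, 1}) = 0 := hfin.measure_zero _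
  filter_upwards [measure_eq_zero_iff_ae_notMem.1 h0] with u hu huI
  refine ⟨⟨lt_of_le_of_ne huI.1 ?_, lt_of_le_of_ne huI.2 ?_⟩, fun h => hu (Or.inl h)⟩
  · intro h; exact hu (Or.inr (by simp [← h]))
  · intro h; exact hu (Or.inr (by simp [h]))

lemma MonoPath.monotone_f1 (γ : MonoPath) : Monotone γ.f1 := by
  have key : ∀ s t : ℝ, s ∈ Icc (0:ℝ) 1 → t ∈ Icc (0:ℝ) 1 → s ≤ t → γ.f1 s ≤ γ.f1 t := by
    intro s t hs ht hst
    have hftc := γ.ftc_f1 hs ht hst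
    have h0 : 0 ≤ ∫ u in s..t, deriv γ.f1 u := by
      refine integral_nonneg_of_ae_restrict hst ?_
      refine (ae_restrict_iff' measurableSet_Icc).2 ?_
      filter_upwards [γ.ae_good] with u hu huIcc
      have hg := hu (Icc_subset_Icc hs.1 ht.2 huIcc)
      rw [γ.deriv_f1_eq hg.1 hg.2]
      exact γ.d_fst_nonneg u (Ioo_subset_Icc_self hg.1)
    linarith
  intro x y hxy
  have hx : γ.f1 x = γ.f1 (clampI 0 1 x) := by
    unfold MonoPath.f1; rw [clampI_eq (clampI_mem zero_le_one x)]
  have hy : γ.f1 y = γ.f1 (clampI 0 1 y) := by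
    unfold MonoPath.f1; rw [clampI_eq (clampI_mem zero_le_one y)]
  rw [hx, hy]
  exact key _ _ (clampI_mem zero_le_one x) (clampI_mem zero_le_one y)
    (monotone_clampI 0 1 hxy)



noncomputable def pd1c2 (c : ℝ × ℝ → ℝ × ℝ) (q : ℝ × ℝ) : ℝ :=
  deriv (fun s => (c (s, q.2)).2) q.1

noncomputable def pd2c1 (c : ℝ × ℝ → ℝ × ℝ) (q : ℝ × ℝ) : ℝ :=
  deriv (fun y => (c (q.1, y)).1) q.2

lemma Ucurl_eq (c : ℝ × ℝ → ℝ × ℝ) (q : ℝ × ℝ) : Ucurl c q = pd2c1 c q - pd1c2 c q := rfl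

variable {c : ℝ × ℝ → ℝ × ℝ}

lemma hasDerivAt_horiz (hc : ContDiff ℝ 1 c) (x y : ℝ) :
    HasDerivAt (fun s => c (s, y)) (fderiv ℝ c (x, y) (1, 0)) x := by
  have h1 : HasDerivAt (fun s : ℝ => (s, y)) ((1 : ℝ), (0 : ℝ)) x :=
    (hasDerivAt_id x).prodMk (hasDerivAt_const x y)
  exact ((hc.differentiable one_ne_zero (x, y)).hasFDerivAt).comp_hasDerivAt x h1

lemma hasDerivAt_vert (hc : ContDiff ℝ 1 c) (x y : ℝ) :
    HasDerivAt (fun v => c (x, v)) (fderiv ℝ c (x, y) (0, 1)) y := by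
  have h1 : HasDerivAt (fun v : ℝ => (x, v)) ((0 : ℝ), (1 : ℝ)) y :=
    (hasDerivAt_const y x).prodMk (hasDerivAt_id y)
  exact ((hc.differentiable one_ne_zero (x, y)).hasFDerivAt).comp_hasDerivAt y h1

lemma hasDerivAt_pd1 (hc : ContDiff ℝ 1 c) (x y : ℝ) :
    HasDerivAt (fun s => (c (s, y)).2) (pd1c2 c (x, y)) x := by
  have h := (ContinuousLinearMap.snd ℝ ℝ ℝ).hasFDerivAt.comp_hasDerivAt x
    (hasDerivAt_horiz hc x y)
  have h' : HasDerivAt (fun s => (c (s, y)).2) ((fderiv ℝ c (x, y) (1, 0)).2) x := h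
  have : pd1c2 c (x, y) = (fderiv ℝ c (x, y) (1, 0)).2 := h'.deriv
  rw [this]; exact h'

lemma hasDerivAt_pd2 (hc : ContDiff ℝ 1 c) (x y : ℝ) :
    HasDerivAt (fun v => (c (x, v)).1) (pd2c1 c (x, y)) y := by
  have h := (ContinuousLinearMap.fst ℝ ℝ ℝ).hasFDerivAt.comp_hasDerivAt y
    (hasDerivAt_vert hc x y)
  have h' : HasDerivAt (fun v => (c (x, v)).1) ((fderiv ℝ c (x, y) (0, 1)).1) y := h
  have : pd2c1 c (x, y) = (fderiv ℝ c (x, y) (0, 1)).1 := h'.deriv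
  rw [this]; exact h'

lemma pd1_eq (hc : ContDiff ℝ 1 c) (q : ℝ × ℝ) :
    pd1c2 c q = (fderiv ℝ c q (1, 0)).2 := by
  have h := (ContinuousLinearMap.snd ℝ ℝ ℝ).hasFDerivAt.comp_hasDerivAt q.1
    (hasDerivAt_horiz hc q.1 q.2)
  have h' : HasDerivAt (fun s => (c (s, q.2)).2) ((fderiv ℝ c q (1, 0)).2) q.1 := h
  exact h'.deriv

lemma pd2_eq (hc : ContDiff ℝ 1 c) (q : ℝ × ℝ) :
    pd2c1 c q = (fderiv ℝ c q (0, 1)).1 := by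
  have h := (ContinuousLinearMap.fst ℝ ℝ ℝ).hasFDerivAt.comp_hasDerivAt q.2
    (hasDerivAt_vert hc q.1 q.2)
  have h' : HasDerivAt (fun v => (c (q.1, v)).1) ((fderiv ℝ c q (0, 1)).1) q.2 := h
  exact h'.deriv

lemma continuous_pd1 (hc : ContDiff ℝ 1 c) : Continuous (pd1c2 c) := by
  have : Continuous fun q : ℝ × ℝ => (fderiv ℝ c q (1, 0)).2 :=
    (((hc.continuous_fderiv one_ne_zero).clm_apply continuous_const)).snd
  exact this.congr fun q => (pd1_eq hc q).symm

lemma continuous_pd2 (hc : ContDiff ℝ 1 c) : Continuous (pd2c1 c) := by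
  have : Continuous fun q : ℝ × ℝ => (fderiv ℝ c q (0, 1)).1 :=
    (((hc.continuous_fderiv one_ne_zero).clm_apply continuous_const)).fst
  exact this.congr fun q => (pd2_eq hc q).symm

lemma continuous_U (hc : ContDiff ℝ 1 c) : Continuous (Ucurl c) := by
  have : Ucurl c = fun q => pd2c1 c q - pd1c2 c q := rfl
  rw [this]; exact (continuous_pd2 hc).sub (continuous_pd1 hc)

noncomputable def Wfun (c : ℝ × ℝ → ℝ × ℝ) (a2 : ℝ) (q : ℝ × ℝ) : ℝ :=
  ∫ s in a2..q.2, Ucurl c (q.1, s)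

lemma continuous_Wfun (hc : ContDiff ℝ 1 c) (a2 : ℝ) : Continuous (Wfun c a2) := by
  have hf : Continuous (Function.uncurry fun (q : ℝ × ℝ) (t : ℝ) => Ucurl c (q.1, t)) :=
    (continuous_U hc).comp ((continuous_fst.comp continuous_fst).prodMk continuous_snd)
  exact intervalIntegral.continuous_parametric_intervalIntegral_of_continuous hf continuous_snd

noncomputable def Phi (c : ℝ × ℝ → ℝ × ℝ) (a : ℝ × ℝ) (q : ℝ × ℝ) : ℝ :=
  (∫ s in a.1..q.1, (c (s, a.2)).1) + ∫ s in a.2..q.2, (c (q.1, s)).2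

lemma cont_c1 (hc : ContDiff ℝ 1 c) (y : ℝ) : Continuous fun s => (c (s, y)).1 :=
  (hc.continuous.comp (continuous_id.prodMk continuous_const)).fst

lemma cont_c2' (hc : ContDiff ℝ 1 c) (x : ℝ) : Continuous fun s => (c (x, s)).2 :=
  (hc.continuous.comp (continuous_const.prodMk continuous_id)).snd

/-- x-derivative of `x ↦ ∫ s in a2..y0, c₂(x,s)` -/
lemma hasDerivAt_Bslice (hc : ContDiff ℝ 1 c) (a2 y0 x0 : ℝ) :
    HasDerivAt (fun x => ∫ s in a2..y0, (c (x, s)).2)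
      (∫ s in a2..y0, pd1c2 c (x0, s)) x0 := by
  obtain ⟨M, hM⟩ : ∃ M, ∀ z ∈ (Icc (x0 - 1) (x0 + 1) ×ˢ uIcc a2 y0), ‖pd1c2 c z‖ ≤ M :=
    (isCompact_Icc.prod isCompact_uIcc).exists_bound_of_continuousOn
      (continuous_pd1 hc).continuousOn
  have hball : ∀ x ∈ Metric.ball x0 1, x ∈ Icc (x0 - 1) (x0 + 1) := by
    intro x hx
    have := abs_sub_lt_iff.1 (mem_ball_iff_norm.1 hx)
    exact ⟨by linarith [this.1, this.2], by linarith [this.1, this.2]⟩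
  have key := intervalIntegral.hasDerivAt_integral_of_dominated_loc_of_deriv_le
    (F := fun x t => (c (x, t)).2) (F' := fun x t => pd1c2 c (x, t)) (x₀ := x0)
    (bound := fun _ => M) (a := a2) (b := y0) (μ := volume) (Metric.ball_mem_nhds x0 one_pos)
    (Filter.Eventually.of_forall fun x => ((cont_c2' hc x).aestronglyMeasurable))
    ((cont_c2' hc x0).intervalIntegrable _ _)
    (((continuous_pd1 hc).comp (continuous_const.prodMk continuous_id)).aestronglyMeasurable)
    (Filter.Eventually.of_forall fun t ht x hx =>
      hM (x, t) ⟨hball x hx, uIoc_subset_uIcc ht⟩)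
    (intervalIntegrable_const)
    (Filter.Eventually.of_forall fun t _ x _ => hasDerivAt_pd1 hc x t)
  exact key.2

/-- coefficient identity: `c₁ - ∂ₓΦ = W`. -/
lemma coeff_identity (hc : ContDiff ℝ 1 c) (a2 : ℝ) (q : ℝ × ℝ) :
    (c q).1 - Wfun c a2 q = (c (q.1, a2)).1 + ∫ s in a2..q.2, pd1c2 c (q.1, s) := by
  have h1 : ∫ s in a2..q.2, pd2c1 c (q.1, s) = (c q).1 - (c (q.1, a2)).1 := by
    have := intervalIntegral.integral_eq_sub_of_hasDerivAt
      (f := fun v => (c (q.1, v)).1) (f' := fun s => pd2c1 c (q.1, s)) (a := a2) (b := q.2)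
      (fun s _ => hasDerivAt_pd2 hc q.1 s)
      (((continuous_pd2 hc).comp (continuous_const.prodMk continuous_id)).intervalIntegrable _ _)
    simpa using this
  have ha : IntervalIntegrable (fun s => pd2c1 c (q.1, s)) volume a2 q.2 :=
    Continuous.intervalIntegrable
      ((continuous_pd2 hc).comp (continuous_const.prodMk continuous_id)) _ _
  have hb : IntervalIntegrable (fun s => pd1c2 c (q.1, s)) volume a2 q.2 :=
    Continuous.intervalIntegrable
      ((continuous_pd1 hc).comp (continuous_const.prodMk continuous_id)) _ _
  have h2 : Wfun c a2 q = (∫ s in a2..q.2, pd2c1 c (q.1, s)) - ∫ s in a2..q.2, pd1c2 c (q.1, s) := by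
    unfold Wfun
    rw [← intervalIntegral.integral_sub ha hb]
    rfl
  rw [h2, h1]; ring

lemma hasFDerivAt_Phi (hc : ContDiff ℝ 1 c) (a : ℝ × ℝ) (q : ℝ × ℝ) :
    HasFDerivAt (Phi c a)
      ((((c q).1 - Wfun c a.2 q) • ContinuousLinearMap.fst ℝ ℝ ℝ) +
        ((c q).2 • ContinuousLinearMap.snd ℝ ℝ ℝ)) q := by
  classical
  set I0 : ℝ := ∫ s in a.2..q.2, pd1c2 c (q.1, s) with hI0
  -- the A part
  have hA : HasDerivAt (fun x => ∫ s in a.1..x, (c (s, a.2)).1) ((c (q.1, a.2)).1) q.1 :=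
    ((cont_c1 hc a.2).integral_hasStrictDerivAt a.1 q.1).hasDerivAt
  have hAF : HasFDerivAt (fun p : ℝ × ℝ => ∫ s in a.1..p.1, (c (s, a.2)).1)
      ((c (q.1, a.2)).1 • ContinuousLinearMap.fst ℝ ℝ ℝ) q :=
    hA.comp_hasFDerivAt q hasFDerivAt_fst
  -- the B part
  set g : ℝ → ℝ := fun x => ∫ s in a.2..q.2, (c (x, s)).2 with hgdef
  have hgd : HasDerivAt g I0 q.1 := hasDerivAt_Bslice hc a.2 q.2 q.1
  have hsplit : ∀ p : ℝ × ℝ, (∫ s in a.2..p.2, (c (p.1, s)).2)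
      = g p.1 + ∫ s in q.2..p.2, (c (p.1, s)).2 := by
    intro p
    rw [hgdef]
    exact (integral_add_adjacent_intervals
      ((cont_c2' hc p.1).intervalIntegrable _ _)
      ((cont_c2' hc p.1).intervalIntegrable _ _)).symm
  have hT1 : (fun p : ℝ × ℝ => g p.1 - g q.1 - (p.1 - q.1) • I0) =o[nhds q]
      (fun p : ℝ × ℝ => p - q) := by
    have h1 := hasDerivAt_iff_isLittleO.1 hgd
    have h2 := h1.comp_tendsto (continuous_fst.tendsto q)
    refine h2.trans_isBigO ?_
    refine Asymptotics.isBigO_of_le _ (fun p => ?_)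
    have : p.1 - q.1 = (p - q).1 := rfl
    rw [Function.comp_apply, this]
    exact norm_fst_le (p - q)
  have hT2 : (fun p : ℝ × ℝ => (∫ s in q.2..p.2, (c (p.1, s)).2) - (p.2 - q.2) • (c q).2)
      =o[nhds q] (fun p : ℝ × ℝ => p - q) := by
    rw [Asymptotics.isLittleO_iff]
    intro ε hε
    obtain ⟨δ, hδ, hδc⟩ := Metric.continuousAt_iff.1 (hc.continuous.snd.continuousAt (x := q)) ε hε
    filter_upwards [Metric.ball_mem_nhds q hδ] with p hp
    have hdist : dist p q < δ := Metric.mem_ball.1 hp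
    rw [Prod.dist_eq] at hdist
    have hbound : ∀ s ∈ Set.uIoc q.2 p.2, ‖(c (p.1, s)).2 - (c q).2‖ ≤ ε := by
      intro s hs
      have habs : |s - q.2| ≤ |p.2 - q.2| := by
        rcases le_total q.2 p.2 with h | h
        · rw [Set.uIoc_of_le h] at hs
          rw [abs_of_nonneg (by linarith [hs.1]), abs_of_nonneg (by linarith)]
          linarith [hs.2]
        · rw [Set.uIoc_of_ge h] at hs
          rw [abs_of_nonpos (by linarith [hs.2]), abs_of_nonpos (by linarith)]
          linarith [hs.1]
      have hd1 : dist p.1 q.1 < δ := lt_of_le_of_lt (le_max_left _ _) hdist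
      have hd2 : dist s q.2 < δ := by
        have : dist p.2 q.2 < δ := lt_of_le_of_lt (le_max_right _ _) hdist
        rw [Real.dist_eq] at this ⊢
        exact lt_of_le_of_lt habs this
      have : dist ((p.1, s) : ℝ × ℝ) q < δ := by
        rw [Prod.dist_eq]
        exact max_lt hd1 hd2
      exact le_of_lt (hδc this)
    have heq : (∫ s in q.2..p.2, (c (p.1, s)).2) - (p.2 - q.2) • (c q).2
        = ∫ s in q.2..p.2, ((c (p.1, s)).2 - (c q).2) := by
      rw [intervalIntegral.integral_sub ((cont_c2' hc p.1).intervalIntegrable _ _)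
        (intervalIntegrable_const), intervalIntegral.integral_const]
    rw [heq]
    calc ‖∫ s in q.2..p.2, ((c (p.1, s)).2 - (c q).2)‖
        ≤ ε * |p.2 - q.2| := intervalIntegral.norm_integral_le_of_norm_le_const hbound
      _ ≤ ε * ‖p - q‖ := by
          refine mul_le_mul_of_nonneg_left ?_ (le_of_lt hε)
          have h22 : p.2 - q.2 = (p - q).2 := rfl
          rw [← Real.norm_eq_abs, h22]
          exact norm_snd_le (p - q)
  have hB : HasFDerivAt (fun p : ℝ × ℝ => ∫ s in a.2..p.2, (c (p.1, s)).2)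
      (I0 • ContinuousLinearMap.fst ℝ ℝ ℝ + (c q).2 • ContinuousLinearMap.snd ℝ ℝ ℝ) q := by
    rw [hasFDerivAt_iff_isLittleO]
    have heq : (fun p : ℝ × ℝ => (∫ s in a.2..p.2, (c (p.1, s)).2)
          - (∫ s in a.2..q.2, (c (q.1, s)).2)
          - (I0 • ContinuousLinearMap.fst ℝ ℝ ℝ + (c q).2 • ContinuousLinearMap.snd ℝ ℝ ℝ) (p - q))
        = fun p : ℝ × ℝ => (g p.1 - g q.1 - (p.1 - q.1) • I0)
          + ((∫ s in q.2..p.2, (c (p.1, s)).2) - (p.2 - q.2) • (c q).2) := by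
      funext p
      rw [hsplit p]
      have hq : (∫ s in a.2..q.2, (c (q.1, s)).2) = g q.1 := rfl
      rw [hq]
      simp only [ContinuousLinearMap.add_apply, ContinuousLinearMap.smul_apply,
        ContinuousLinearMap.coe_fst', ContinuousLinearMap.coe_snd', smul_eq_mul,
        Prod.fst_sub, Prod.snd_sub]
      ring
    rw [heq]
    exact hT1.add hT2
  have hsum := hAF.add hB
  have hclm : (((c q).1 - Wfun c a.2 q) • ContinuousLinearMap.fst ℝ ℝ ℝ) +
      ((c q).2 • ContinuousLinearMap.snd ℝ ℝ ℝ)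
      = ((c (q.1, a.2)).1 • ContinuousLinearMap.fst ℝ ℝ ℝ) +
        (I0 • ContinuousLinearMap.fst ℝ ℝ ℝ + (c q).2 • ContinuousLinearMap.snd ℝ ℝ ℝ) := by
    rw [coeff_identity hc a.2 q, ← hI0, add_smul, add_assoc]
  rw [hclm]
  exact hsum


lemma continuous_Phi (hc : ContDiff ℝ 1 c) (a : ℝ × ℝ) : Continuous (Phi c a) := by
  have h : Differentiable ℝ (Phi c a) := fun q => (hasFDerivAt_Phi hc a q).differentiableAt
  exact h.continuous

lemma hasDerivAt_Phi_comp (hc : ContDiff ℝ 1 c) (a : ℝ × ℝ) (γ : MonoPath) {t : ℝ}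
    (ht : t ∈ Icc (0:ℝ) 1 \ γ.exc) :
    HasDerivAt (fun u => Phi c a (γ.p u))
      (((c (γ.p t)).1 - Wfun c a.2 (γ.p t)) * (γ.d t).1 + (c (γ.p t)).2 * (γ.d t).2) t := by
  have hp : HasDerivAt γ.p (γ.d t) t := by
    have h := (γ.deriv_fst t ht).prodMk (γ.deriv_snd t ht)
    simpa only [Prod.mk.eta] using h
  have h2 := (hasFDerivAt_Phi hc a (γ.p t)).comp_hasDerivAt t hp
  convert h2 using 1
  case e'_4 => rfl
  case e'_5 => rfl
  case e'_8 => rfl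
  all_goals simp only [ContinuousLinearMap.add_apply, ContinuousLinearMap.smul_apply,
    ContinuousLinearMap.coe_fst', ContinuousLinearMap.coe_snd', smul_eq_mul]
  all_goals ring

lemma bound_exists (hc : ContDiff ℝ 1 c) (a b : ℝ × ℝ) :
    ∃ M : ℝ, 0 ≤ M ∧ ∀ q ∈ Icc a b, |(c q).1| ≤ M ∧ |(c q).2| ≤ M ∧ |Wfun c a.2 q| ≤ M := by
  obtain ⟨M1, hM1⟩ := (isCompact_Icc (a := a) (b := b)).exists_bound_of_continuousOn
    (hc.continuous.fst.continuousOn)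
  obtain ⟨M2, hM2⟩ := (isCompact_Icc (a := a) (b := b)).exists_bound_of_continuousOn
    (hc.continuous.snd.continuousOn)
  obtain ⟨M3, hM3⟩ := (isCompact_Icc (a := a) (b := b)).exists_bound_of_continuousOn
    ((continuous_Wfun hc a.2).continuousOn)
  refine ⟨max 0 (max (max M1 M2) M3), le_max_left _ _, fun q hq => ?_⟩
  have h1 := hM1 q hq; have h2 := hM2 q hq; have h3 := hM3 q hq
  rw [Real.norm_eq_abs] at h1 h2 h3
  refine ⟨h1.trans (le_max_of_le_right (le_max_of_le_left (le_max_left _ _))),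
    h2.trans (le_max_of_le_right (le_max_of_le_left (le_max_right _ _))),
    h3.trans (le_max_of_le_right (le_max_right _ _))⟩

lemma ae_Ioc_good (γ : MonoPath) :
    ∀ᵐ u ∂(volume.restrict (Ioc (0:ℝ) 1)), u ∈ Ioo (0:ℝ) 1 \ γ.exc := by
  have h := ae_restrict_of_ae (μ := volume) (s := Ioc (0:ℝ) 1) γ.ae_good
  filter_upwards [h, ae_restrict_mem measurableSet_Ioc] with u hu hmem
  exact hu (Ioc_subset_Icc_self hmem)

lemma d1_ae_eq (γ : MonoPath) :
    (fun u => (γ.d u).1) =ᵐ[volume.restrict (Ioc (0:ℝ) 1)] deriv γ.f1 := by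
  filter_upwards [ae_Ioc_good γ] with u hu
  exact (γ.deriv_f1_eq hu.1 hu.2).symm

lemma d2_ae_eq (γ : MonoPath) :
    (fun u => (γ.d u).2) =ᵐ[volume.restrict (Ioc (0:ℝ) 1)] deriv γ.f2 := by
  filter_upwards [ae_Ioc_good γ] with u hu
  exact (γ.deriv_f2_eq hu.1 hu.2).symm

lemma d1_integrable (γ : MonoPath) : IntegrableOn (fun u => (γ.d u).1) (Ioc (0:ℝ) 1) volume :=
  (γ.II_f1.1).congr (d1_ae_eq γ).symm

lemma d2_integrable (γ : MonoPath) : IntegrableOn (fun u => (γ.d u).2) (Ioc (0:ℝ) 1) volume :=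
  (γ.II_f2.1).congr (d2_ae_eq γ).symm

lemma p_aesm (γ : MonoPath) :
    AEStronglyMeasurable γ.p (volume.restrict (Ioc (0:ℝ) 1)) :=
  (γ.cont.aestronglyMeasurable measurableSet_Icc).mono_measure
    (Measure.restrict_mono Ioc_subset_Icc_self le_rfl)

lemma d1_aesm (γ : MonoPath) :
    AEStronglyMeasurable (fun u => (γ.d u).1) (volume.restrict (Ioc (0:ℝ) 1)) :=
  (γ.II_f1.1.aestronglyMeasurable).congr (d1_ae_eq γ).symm

lemma d2_aesm (γ : MonoPath) :
    AEStronglyMeasurable (fun u => (γ.d u).2) (volume.restrict (Ioc (0:ℝ) 1)) :=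
  (γ.II_f2.1.aestronglyMeasurable).congr (d2_ae_eq γ).symm

lemma W_term_integrable (hc : ContDiff ℝ 1 c) (a b : ℝ × ℝ) (γ : MonoPath)
    (hγ : IsMonoPathFromTo γ a b) :
    IntegrableOn (fun t => Wfun c a.2 (γ.p t) * (γ.d t).1) (Ioc (0:ℝ) 1) volume := by
  obtain ⟨M, hM0, hM⟩ := bound_exists hc a b
  refine Integrable.mono' ((d1_integrable γ).const_mul M) ?_ ?_
  · exact ((continuous_Wfun hc a.2).comp_aestronglyMeasurable (p_aesm γ)).mul (d1_aesm γ)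
  · filter_upwards [ae_restrict_mem measurableSet_Ioc, ae_Ioc_good γ] with t ht htg
    have hmem : γ.p t ∈ Icc a b := hγ.2.2 t (Ioc_subset_Icc_self ht)
    have hd1 : 0 ≤ (γ.d t).1 := γ.d_fst_nonneg t (Ioc_subset_Icc_self ht)
    have := (hM _ hmem).2.2
    rw [Real.norm_eq_abs, abs_mul, abs_of_nonneg hd1]
    exact mul_le_mul_of_nonneg_right this hd1

lemma cost_term_integrable (hc : ContDiff ℝ 1 c) (a b : ℝ × ℝ) (γ : MonoPath)
    (hγ : IsMonoPathFromTo γ a b) :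
    IntegrableOn (fun t => (c (γ.p t)).1 * (γ.d t).1 + (c (γ.p t)).2 * (γ.d t).2)
      (Ioc (0:ℝ) 1) volume := by
  obtain ⟨M, hM0, hM⟩ := bound_exists hc a b
  refine Integrable.mono'
    (((d1_integrable γ).const_mul M).add ((d2_integrable γ).const_mul M)) ?_ ?_
  · exact ((hc.continuous.fst.comp_aestronglyMeasurable (p_aesm γ)).mul (d1_aesm γ)).add
      ((hc.continuous.snd.comp_aestronglyMeasurable (p_aesm γ)).mul (d2_aesm γ))
  · filter_upwards [ae_restrict_mem measurableSet_Ioc] with t ht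
    have hmem : γ.p t ∈ Icc a b := hγ.2.2 t (Ioc_subset_Icc_self ht)
    have hd1 : 0 ≤ (γ.d t).1 := γ.d_fst_nonneg t (Ioc_subset_Icc_self ht)
    have hd2 : 0 ≤ (γ.d t).2 := γ.d_snd_nonneg t (Ioc_subset_Icc_self ht)
    have h1 := (hM _ hmem).1
    have h2 := (hM _ hmem).2.1
    rw [Real.norm_eq_abs]
    calc |(c (γ.p t)).1 * (γ.d t).1 + (c (γ.p t)).2 * (γ.d t).2|
        ≤ |(c (γ.p t)).1 * (γ.d t).1| + |(c (γ.p t)).2 * (γ.d t).2| := abs_add_le _ _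
      _ ≤ M * (γ.d t).1 + M * (γ.d t).2 := by
          rw [abs_mul, abs_mul, abs_of_nonneg hd1, abs_of_nonneg hd2]
          exact add_le_add (mul_le_mul_of_nonneg_right h1 hd1)
            (mul_le_mul_of_nonneg_right h2 hd2)

lemma cost_eq (hc : ContDiff ℝ 1 c) (a b : ℝ × ℝ) (γ : MonoPath)
    (hγ : IsMonoPathFromTo γ a b) :
    pathCost c γ = Phi c a b - Phi c a a +
      ∫ t in Ioc (0:ℝ) 1, Wfun c a.2 (γ.p t) * (γ.d t).1 := by
  have hWint := W_term_integrable hc a b γ hγ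
  have hcint := cost_term_integrable hc a b γ hγ
  have hgint : IntegrableOn
      (fun t => ((c (γ.p t)).1 - Wfun c a.2 (γ.p t)) * (γ.d t).1 + (c (γ.p t)).2 * (γ.d t).2)
      (Ioc (0:ℝ) 1) volume := by
    have h := hcint.sub hWint
    refine h.congr ?_
    filter_upwards with t
    simp only [Pi.sub_apply]
    ring
  have hginterval : IntervalIntegrable
      (fun t => ((c (γ.p t)).1 - Wfun c a.2 (γ.p t)) * (γ.d t).1 + (c (γ.p t)).2 * (γ.d t).2)
      volume 0 1 := (intervalIntegrable_iff_integrableOn_Ioc_of_le zero_le_one).2 hgint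
  have hftc : (∫ u in (0:ℝ)..1,
      (((c (γ.p u)).1 - Wfun c a.2 (γ.p u)) * (γ.d u).1 + (c (γ.p u)).2 * (γ.d u).2))
      = Phi c a (γ.p 1) - Phi c a (γ.p 0) := by
    refine ftc_exc γ.exc_finite zero_le_one
      ((continuous_Phi hc a).comp_continuousOn γ.cont) ?_ hginterval
    intro u hu hu'
    exact hasDerivAt_Phi_comp hc a γ ⟨Ioo_subset_Icc_self hu, hu'⟩
  rw [intervalIntegral.integral_of_le zero_le_one] at hftc
  have hsplit : ∫ t in Ioc (0:ℝ) 1, ((c (γ.p t)).1 * (γ.d t).1 + (c (γ.p t)).2 * (γ.d t).2)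
      = (∫ t in Ioc (0:ℝ) 1,
          (((c (γ.p t)).1 - Wfun c a.2 (γ.p t)) * (γ.d t).1 + (c (γ.p t)).2 * (γ.d t).2))
        + ∫ t in Ioc (0:ℝ) 1, Wfun c a.2 (γ.p t) * (γ.d t).1 := by
    rw [← integral_add hgint hWint]
    congr 1
    funext t
    ring
  have hpc : pathCost c γ
      = ∫ t in Ioc (0:ℝ) 1, ((c (γ.p t)).1 * (γ.d t).1 + (c (γ.p t)).2 * (γ.d t).2) := by
    unfold pathCost
    rw [intervalIntegral.integral_of_le zero_le_one]
  rw [hpc, hsplit, hftc, hγ.1, hγ.2.1]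

lemma lint_deriv (γ : MonoPath) {s t : ℝ} (hs : s ∈ Icc (0:ℝ) 1) (ht : t ∈ Icc (0:ℝ) 1)
    (hst : s ≤ t) :
    ∫⁻ u in Ioc s t, ENNReal.ofReal (deriv γ.f1 u) = ENNReal.ofReal (γ.f1 t - γ.f1 s) := by
  have hint : IntegrableOn (deriv γ.f1) (Ioc s t) volume :=
    (γ.II_f1.mono_set (by
      rw [uIcc_of_le hst, uIcc_of_le zero_le_one]; exact Icc_subset_Icc hs.1 ht.2)).1
  have hnn : 0 ≤ᵐ[volume.restrict (Ioc s t)] deriv γ.f1 := by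
    have h := ae_restrict_of_ae (μ := volume) (s := Ioc s t) γ.ae_good
    filter_upwards [h, ae_restrict_mem measurableSet_Ioc] with u hu hmem
    have hg := hu ⟨le_of_lt (lt_of_le_of_lt hs.1 hmem.1), hmem.2.trans ht.2⟩
    rw [γ.deriv_f1_eq hg.1 hg.2]
    exact γ.d_fst_nonneg u (Ioo_subset_Icc_self hg.1)
  rw [← ofReal_integral_eq_lintegral_ofReal hint hnn]
  congr 1
  rw [← intervalIntegral.integral_of_le hst]
  exact γ.ftc_f1 hs ht hst

lemma map_density (γ : MonoPath) (a b : ℝ × ℝ) (hγ : IsMonoPathFromTo γ a b) :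
    Measure.map γ.f1 ((volume.restrict (Ioc (0:ℝ) 1)).withDensity
      (fun u => ENNReal.ofReal (deriv γ.f1 u))) = volume.restrict (Icc a.1 b.1) := by
  have hmeas : Measurable γ.f1 := γ.continuous_f1.measurable
  have hf10 : γ.f1 0 = a.1 := by
    rw [γ.f1_eq (left_mem_Icc.2 zero_le_one), hγ.1]
  have hf11 : γ.f1 1 = b.1 := by
    rw [γ.f1_eq (right_mem_Icc.2 zero_le_one), hγ.2.1]
  have hrange : ∀ u ∈ Icc (0:ℝ) 1, γ.f1 u ∈ Icc a.1 b.1 := by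
    intro u hu
    rw [γ.f1_eq hu]
    exact ⟨(hγ.2.2 u hu).1.1, (hγ.2.2 u hu).2.1⟩
  set ν := (volume.restrict (Ioc (0:ℝ) 1)).withDensity
    (fun u => ENNReal.ofReal (deriv γ.f1 u)) with hν
  haveI hfin1 : IsFiniteMeasure ν := by
    constructor
    rw [hν, withDensity_apply _ MeasurableSet.univ, Measure.restrict_restrict MeasurableSet.univ,
      univ_inter]
    rw [lint_deriv γ (left_mem_Icc.2 zero_le_one) (right_mem_Icc.2 zero_le_one) zero_le_one]
    exact ENNReal.ofReal_lt_top
  haveI hfin2 : IsFiniteMeasure (Measure.map γ.f1 ν) := by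
    constructor
    rw [Measure.map_apply hmeas MeasurableSet.univ, preimage_univ]
    exact measure_lt_top _ _
  haveI hfin3 : IsFiniteMeasure (volume.restrict (Icc a.1 b.1)) := by
    constructor
    rw [Measure.restrict_apply_univ]
    exact measure_Icc_lt_top
  refine MeasureTheory.Measure.ext_of_Iic _ _ (fun x => ?_)
  rw [Measure.map_apply hmeas measurableSet_Iic, hν,
    withDensity_apply _ (hmeas measurableSet_Iic),
    Measure.restrict_restrict (hmeas measurableSet_Iic),
    Measure.restrict_apply measurableSet_Iic]
  rcases lt_or_ge x a.1 with hx | hx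
  · have h1 : γ.f1 ⁻¹' (Iic x) ∩ Ioc 0 1 = ∅ := by
      ext u
      simp only [mem_inter_iff, mem_preimage, mem_Iic, mem_Ioc, mem_empty_iff_false,
        iff_false, not_and]
      intro hux h0u
      intro hu1
      have := (hrange u ⟨le_of_lt h0u, hu1⟩).1
      linarith
    have h2 : Iic x ∩ Icc a.1 b.1 = ∅ := by
      ext y
      simp only [mem_inter_iff, mem_Iic, mem_Icc, mem_empty_iff_false, iff_false, not_and]
      intro hy hya
      intro _
      linarith
    rw [h1, h2]
    simp
  rcases le_or_gt b.1 x with hxb | hxb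
  · have h1 : γ.f1 ⁻¹' (Iic x) ∩ Ioc 0 1 = Ioc 0 1 := by
      refine inter_eq_self_of_subset_right ?_
      intro u hu
      have := (hrange u (Ioc_subset_Icc_self hu)).2
      exact le_trans this hxb
    have h2 : Iic x ∩ Icc a.1 b.1 = Icc a.1 b.1 := by
      refine inter_eq_self_of_subset_right ?_
      intro y hy
      exact le_trans hy.2 hxb
    rw [h1, h2, lint_deriv γ (left_mem_Icc.2 zero_le_one) (right_mem_Icc.2 zero_le_one)
      zero_le_one, hf11, hf10, Real.volume_Icc]
  · -- a.1 ≤ x < b.1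
    set T : Set ℝ := Icc (0:ℝ) 1 ∩ γ.f1 ⁻¹' (Iic x) with hT
    have hne : T.Nonempty := ⟨0, left_mem_Icc.2 zero_le_one, by
      simp only [mem_preimage, mem_Iic, hf10]; exact hx⟩
    have hbdd : BddAbove T := ⟨1, fun u hu => hu.1.2⟩
    set τ := sSup T with hτ
    have hclosed : IsClosed T := isClosed_Icc.inter (isClosed_Iic.preimage γ.continuous_f1)
    have hτT : τ ∈ T := hclosed.csSup_mem hne hbdd
    have hτI : τ ∈ Icc (0:ℝ) 1 := hτT.1
    have hfτx : γ.f1 τ ≤ x := hτT.2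
    have hfτ : γ.f1 τ = x := by
      by_contra hne'
      have hlt : γ.f1 τ < x := lt_of_le_of_ne hfτx hne'
      have hτ1 : τ < 1 := by
        rcases eq_or_lt_of_le hτI.2 with h | h
        · exfalso; rw [h, hf11] at hlt; linarith
        · exact h
      have hcont : ContinuousAt γ.f1 τ := γ.continuous_f1.continuousAt
      have hev : γ.f1 ⁻¹' (Iio x) ∈ nhds τ := hcont (Iio_mem_nhds hlt)
      obtain ⟨ε, hε, hball⟩ := Metric.mem_nhds_iff.1 hev
      set u := min (τ + ε / 2) ((τ + 1) / 2) with hu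
      have huτ : τ < u := by
        rw [hu]; exact lt_min (by linarith) (by linarith)
      have hu1 : u ≤ 1 := by
        rw [hu]
        exact le_trans (min_le_right _ _) (by linarith)
      have hu0 : 0 ≤ u := le_trans hτI.1 (le_of_lt huτ)
      have hudist : u ∈ Metric.ball τ ε := by
        rw [Metric.mem_ball, Real.dist_eq, abs_of_pos (by linarith)]
        have : u ≤ τ + ε / 2 := min_le_left _ _
        linarith
      have hlt2 : γ.f1 u < x := mem_Iio.1 (mem_preimage.1 (hball hudist))
      have huT : u ∈ T := ⟨⟨hu0, hu1⟩, show γ.f1 u ≤ x from le_of_lt hlt2⟩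
      have := le_csSup hbdd huT
      linarith
    have hSeq : γ.f1 ⁻¹' (Iic x) ∩ Ioc 0 1 = Ioc 0 τ := by
      ext u
      simp only [mem_inter_iff, mem_preimage, mem_Iic, mem_Ioc]
      constructor
      · rintro ⟨hux, h0u, hu1⟩
        exact ⟨h0u, le_csSup hbdd ⟨⟨le_of_lt h0u, hu1⟩, hux⟩⟩
      · rintro ⟨h0u, huτ⟩
        refine ⟨?_, h0u, huτ.trans hτI.2⟩
        calc γ.f1 u ≤ γ.f1 τ := γ.monotone_f1 huτ
          _ ≤ x := hfτx
    have hIcc : Iic x ∩ Icc a.1 b.1 = Icc a.1 x := by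
      ext y
      simp only [mem_inter_iff, mem_Iic, mem_Icc]
      constructor
      · rintro ⟨h1, h2, h3⟩; exact ⟨h2, h1⟩
      · rintro ⟨h1, h2⟩; exact ⟨h2, h1, h2.trans (le_of_lt hxb)⟩
    rw [hSeq, lint_deriv γ (left_mem_Icc.2 zero_le_one) hτI hτI.1, hf10, hfτ, hIcc,
      Real.volume_Icc]

lemma pullback_null (γ : MonoPath) (a b : ℝ × ℝ) (hγ : IsMonoPathFromTo γ a b)
    {N : Set ℝ} (hN : MeasurableSet N) (hN0 : volume N = 0) :
    ∀ᵐ u ∂(volume.restrict (Ioc (0:ℝ) 1)), γ.f1 u ∈ N → deriv γ.f1 u ≤ 0 := by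
  have hmeas : Measurable γ.f1 := γ.continuous_f1.measurable
  have h1 : Measure.map γ.f1 ((volume.restrict (Ioc (0:ℝ) 1)).withDensity
      (fun u => ENNReal.ofReal (deriv γ.f1 u))) N = 0 := by
    rw [map_density γ a b hγ, Measure.restrict_apply hN]
    exact measure_mono_null inter_subset_left hN0
  rw [Measure.map_apply hmeas hN, withDensity_apply _ (hmeas hN),
    Measure.restrict_restrict (hmeas hN)] at h1
  have h2 := (setLIntegral_eq_zero_iff ((hmeas hN).inter measurableSet_Ioc)
    ((measurable_deriv γ.f1).ennreal_ofReal)).1 h1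
  refine (ae_restrict_iff' measurableSet_Ioc).2 ?_
  filter_upwards [h2] with u hu huIoc huN
  have := hu ⟨huN, huIoc⟩
  simpa using ENNReal.ofReal_eq_zero.1 this

lemma subst_integral (γ : MonoPath) (a b : ℝ × ℝ) (hγ : IsMonoPathFromTo γ a b)
    {m : ℝ → ℝ} (hm : Measurable m) {C : ℝ} (hC : ∀ x, |m x| ≤ C) :
    ∫ t in Ioc (0:ℝ) 1, m (γ.f1 t) * deriv γ.f1 t = ∫ x in Icc a.1 b.1, m x := by
  have hmeas : Measurable γ.f1 := γ.continuous_f1.measurable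
  set ν := (volume.restrict (Ioc (0:ℝ) 1)).withDensity
    (fun u => ENNReal.ofReal (deriv γ.f1 u)) with hν
  have h1 : ∫ x in Icc a.1 b.1, m x = ∫ u, m (γ.f1 u) ∂ν := by
    rw [← map_density γ a b hγ, integral_map hmeas.aemeasurable hm.aestronglyMeasurable]
  have h2 : ∫ u, m (γ.f1 u) ∂ν
      = ∫ u in Ioc (0:ℝ) 1, Real.toNNReal (deriv γ.f1 u) • m (γ.f1 u) := by
    rw [hν]
    exact integral_withDensity_eq_integral_smul ((measurable_deriv γ.f1).real_toNNReal) _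
  rw [h1, h2]
  refine integral_congr_ae ?_
  filter_upwards [ae_Ioc_good γ] with u hu
  have h0 : 0 ≤ deriv γ.f1 u := by
    rw [γ.deriv_f1_eq hu.1 hu.2]
    exact γ.d_fst_nonneg u (Ioo_subset_Icc_self hu.1)
  rw [NNReal.smul_def, Real.coe_toNNReal _ h0, smul_eq_mul]
  ring

lemma MonoPath.monotone_f2 (γ : MonoPath) : Monotone γ.f2 := by
  have key : ∀ s t : ℝ, s ∈ Icc (0:ℝ) 1 → t ∈ Icc (0:ℝ) 1 → s ≤ t → γ.f2 s ≤ γ.f2 t := by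
    intro s t hs ht hst
    have hftc := γ.ftc_f2 hs ht hst
    have h0 : 0 ≤ ∫ u in s..t, deriv γ.f2 u := by
      refine intervalIntegral.integral_nonneg_of_ae_restrict hst ?_
      refine (ae_restrict_iff' measurableSet_Icc).2 ?_
      filter_upwards [γ.ae_good] with u hu huIcc
      have hg := hu (Icc_subset_Icc hs.1 ht.2 huIcc)
      rw [γ.deriv_f2_eq hg.1 hg.2]
      exact γ.d_snd_nonneg u (Ioo_subset_Icc_self hg.1)
    linarith
  intro x y hxy
  have hx : γ.f2 x = γ.f2 (clampI 0 1 x) := by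
    unfold MonoPath.f2; rw [clampI_eq (clampI_mem zero_le_one x)]
  have hy : γ.f2 y = γ.f2 (clampI 0 1 y) := by
    unfold MonoPath.f2; rw [clampI_eq (clampI_mem zero_le_one y)]
  rw [hx, hy]
  exact key _ _ (clampI_mem zero_le_one x) (clampI_mem zero_le_one y)
    (monotone_clampI 0 1 hxy)

lemma hypo_set_nonempty (L : MonoPath) (a b : ℝ × ℝ) (hL : IsMonoPathFromTo L a b) {x : ℝ}
    (hx : a.1 ≤ x) :
    ((fun t => (L.p t).2) '' {t | t ∈ Icc (0:ℝ) 1 ∧ (L.p t).1 ≤ x}).Nonempty :=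
  ⟨(L.p 0).2, 0, ⟨left_mem_Icc.2 zero_le_one, by rw [hL.1]; exact hx⟩, rfl⟩

lemma hypo_bddAbove (L : MonoPath) (a b : ℝ × ℝ) (hL : IsMonoPathFromTo L a b) (x : ℝ) :
    BddAbove ((fun t => (L.p t).2) '' {t | t ∈ Icc (0:ℝ) 1 ∧ (L.p t).1 ≤ x}) := by
  refine ⟨b.2, ?_⟩
  rintro y ⟨t, ht, rfl⟩
  exact (hL.2.2 t ht.1).2.2

lemma hypo_mem (L : MonoPath) (a b : ℝ × ℝ) (hL : IsMonoPathFromTo L a b) {x : ℝ}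
    (hx : x ∈ Icc a.1 b.1) : hypoFun L x ∈ Icc a.2 b.2 := by
  constructor
  · refine le_csSup (hypo_bddAbove L a b hL x) ?_
    exact ⟨0, ⟨left_mem_Icc.2 zero_le_one, by rw [hL.1]; exact hx.1⟩,
      congrArg Prod.snd hL.1⟩
  · exact csSup_le (hypo_set_nonempty L a b hL hx.1)
      (by rintro y ⟨t, ht, rfl⟩; exact (hL.2.2 t ht.1).2.2)

lemma L2_le_hypo (L : MonoPath) (a b : ℝ × ℝ) (hL : IsMonoPathFromTo L a b) {t : ℝ}
    (ht : t ∈ Icc (0:ℝ) 1) : (L.p t).2 ≤ hypoFun L (L.p t).1 :=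
  le_csSup (hypo_bddAbove L a b hL _) ⟨t, ⟨ht, le_rfl⟩, rfl⟩

lemma hypo_monoOn (L : MonoPath) (a b : ℝ × ℝ) (hL : IsMonoPathFromTo L a b) :
    MonotoneOn (hypoFun L) (Icc a.1 b.1) := by
  intro x hx y _ hxy
  refine csSup_le_csSup (hypo_bddAbove L a b hL y) (hypo_set_nonempty L a b hL hx.1) ?_
  rintro z ⟨t, ⟨ht1, ht2⟩, rfl⟩
  exact ⟨t, ⟨ht1, ht2.trans hxy⟩, rfl⟩

noncomputable def hbar (L : MonoPath) (a b : ℝ × ℝ) : ℝ → ℝ :=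
  fun x => hypoFun L (clampI a.1 b.1 x)

lemma hbar_eq (L : MonoPath) (a b : ℝ × ℝ) {x : ℝ} (hx : x ∈ Icc a.1 b.1) :
    hbar L a b x = hypoFun L x := by
  unfold hbar; rw [clampI_eq hx]

lemma hbar_monotone (L : MonoPath) (a b : ℝ × ℝ) (hL : IsMonoPathFromTo L a b)
    (hab1 : a.1 ≤ b.1) : Monotone (hbar L a b) :=
  fun _ _ hxy => hypo_monoOn L a b hL (clampI_mem hab1 _) (clampI_mem hab1 _)
    (monotone_clampI _ _ hxy)

lemma hbar_mem (L : MonoPath) (a b : ℝ × ℝ) (hL : IsMonoPathFromTo L a b)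
    (hab1 : a.1 ≤ b.1) (x : ℝ) : hbar L a b x ∈ Icc a.2 b.2 :=
  hypo_mem L a b hL (clampI_mem hab1 x)

lemma L2_eq_hbar (L : MonoPath) (a b : ℝ × ℝ) (hL : IsMonoPathFromTo L a b)
    {t : ℝ} (ht : t ∈ Icc (0:ℝ) 1) (hgt : a.1 < (L.p t).1)
    (hcont : ContinuousAt (hbar L a b) (L.p t).1) :
    (L.p t).2 = hbar L a b (L.p t).1 := by
  set x := (L.p t).1 with hx
  have hxI : x ∈ Icc a.1 b.1 := ⟨(hL.2.2 t ht).1.1, (hL.2.2 t ht).2.1⟩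
  have hle : (L.p t).2 ≤ hbar L a b x := by
    rw [hbar_eq L a b hxI]; exact L2_le_hypo L a b hL ht
  refine le_antisymm hle ?_
  by_contra hlt
  push_neg at hlt
  set ε := hbar L a b x - (L.p t).2 with hε
  have hεpos : 0 < ε := by rw [hε]; linarith
  obtain ⟨δ, hδ, hδc⟩ := Metric.continuousAt_iff.1 hcont ε hεpos
  set x' := max a.1 (x - δ / 2) with hx'
  have hx'lt : x' < x := by
    rw [hx']; exact max_lt hgt (by linarith)
  have hx'I : x' ∈ Icc a.1 b.1 := ⟨le_max_left _ _, le_trans (le_of_lt hx'lt) hxI.2⟩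
  have hdist : dist x' x < δ := by
    rw [Real.dist_eq, abs_of_nonpos (by linarith)]
    have h2 : x - δ / 2 ≤ x' := le_max_right _ _
    linarith
  have hclose := hδc hdist
  have hle' : hbar L a b x' ≤ (L.p t).2 := by
    rw [hbar_eq L a b hx'I]
    refine csSup_le (hypo_set_nonempty L a b hL hx'I.1) ?_
    rintro z ⟨s, ⟨hs1, hs2⟩, rfl⟩
    have hst : s ≤ t := by
      by_contra hst
      push_neg at hst
      have h1 : L.f1 t ≤ L.f1 s := L.monotone_f1 (le_of_lt hst)
      rw [L.f1_eq ht, L.f1_eq hs1] at h1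
      have : (L.p s).1 ≤ x' := hs2
      linarith
    have h2 : L.f2 s ≤ L.f2 t := L.monotone_f2 hst
    rw [L.f2_eq hs1, L.f2_eq ht] at h2
    exact h2
  rw [Real.dist_eq] at hclose
  have habs : ε ≤ |hbar L a b x' - hbar L a b x| := by
    rw [abs_sub_comm, abs_of_nonneg (by linarith)]
    linarith
  linarith

noncomputable def mfun (c : ℝ × ℝ → ℝ × ℝ) (L : MonoPath) (a b : ℝ × ℝ) : ℝ → ℝ :=
  fun x => Wfun c a.2 (clampI a.1 b.1 x, hbar L a b x)

lemma mfun_measurable (hc : ContDiff ℝ 1 c) (L : MonoPath) (a b : ℝ × ℝ)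
    (hL : IsMonoPathFromTo L a b) (hab1 : a.1 ≤ b.1) : Measurable (mfun c L a b) :=
  (continuous_Wfun hc a.2).measurable.comp
    ((continuous_clampI a.1 b.1).measurable.prodMk (hbar_monotone L a b hL hab1).measurable)

lemma mfun_bound (hc : ContDiff ℝ 1 c) (L : MonoPath) (a b : ℝ × ℝ)
    (hL : IsMonoPathFromTo L a b) (hab1 : a.1 ≤ b.1) :
    ∃ C, ∀ x, |mfun c L a b x| ≤ C := by
  obtain ⟨M, _, hM⟩ := bound_exists hc a b
  refine ⟨M, fun x => ?_⟩
  have h1 := clampI_mem hab1 x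
  have h2 := hbar_mem L a b hL hab1 x
  exact (hM _ ⟨⟨h1.1, h2.1⟩, ⟨h1.2, h2.2⟩⟩).2.2

lemma mfun_eq (c : ℝ × ℝ → ℝ × ℝ) (L : MonoPath) (a b : ℝ × ℝ) {x : ℝ}
    (hx : x ∈ Icc a.1 b.1) : mfun c L a b x = Wfun c a.2 (x, hypoFun L x) := by
  unfold mfun
  rw [clampI_eq hx, hbar_eq L a b hx]

lemma ae_ne_pt (h0 : ℝ) : ∀ᵐ s : ℝ ∂(volume : Measure ℝ), s ≠ h0 := by
  have he : ({h0} : Set ℝ) = {s : ℝ | ¬s ≠ h0} := by ext s; simp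
  rw [ae_iff, ← he]
  exact measure_singleton h0

lemma W_diff (hc : ContDiff ℝ 1 c) (a2 x y0 y : ℝ) :
    Wfun c a2 (x, y) = Wfun c a2 (x, y0) + ∫ s in y0..y, Ucurl c (x, s) := by
  have h1 : IntervalIntegrable (fun s => Ucurl c (x, s)) volume a2 y0 :=
    ((continuous_U hc).comp (continuous_const.prodMk continuous_id)).intervalIntegrable _ _
  have h2 : IntervalIntegrable (fun s => Ucurl c (x, s)) volume y0 y :=
    ((continuous_U hc).comp (continuous_const.prodMk continuous_id)).intervalIntegrable _ _
  exact (integral_add_adjacent_intervals h1 h2).symm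

lemma ae_minimizer (hc : ContDiff ℝ 1 c) (a b : ℝ × ℝ) (hab1 : a.1 ≤ b.1) (hab2 : a.2 ≤ b.2)
    (L : MonoPath) (hL : IsMonoPathFromTo L a b)
    (hUup : ∀ᵐ q ∂((volume : Measure (ℝ × ℝ)).restrict (Icc a b)),
      hypoFun L q.1 < q.2 → 0 ≤ Ucurl c q)
    (hUlow : ∀ᵐ q ∂((volume : Measure (ℝ × ℝ)).restrict (Icc a b)),
      q.2 < hypoFun L q.1 → Ucurl c q ≤ 0) :
    ∀ᵐ x ∂(volume.restrict (Icc a.1 b.1)),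
      ∀ y ∈ Icc a.2 b.2, mfun c L a b x ≤ Wfun c a.2 (x, y) := by
  have hprod : (volume : Measure (ℝ × ℝ)).restrict (Icc a b)
      = (volume.restrict (Icc a.1 b.1)).prod (volume.restrict (Icc a.2 b.2)) := by
    rw [Measure.prod_restrict, ← Measure.volume_eq_prod, ← Icc_prod_eq]
  rw [hprod] at hUup hUlow
  have hae := Measure.ae_ae_of_ae_prod (hUup.and hUlow)
  filter_upwards [hae, ae_restrict_mem measurableSet_Icc] with x hx hxI
  intro y hy
  rw [mfun_eq c L a b hxI]
  set h0 := hypoFun L x with hh0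
  have hh0I : h0 ∈ Icc a.2 b.2 := hypo_mem L a b hL hxI
  have hWd := W_diff hc a.2 x h0 y
  have hx' := (ae_restrict_iff' measurableSet_Icc).1 hx
  have key : 0 ≤ ∫ s in h0..y, Ucurl c (x, s) := by
    rcases le_total h0 y with hcase | hcase
    · refine intervalIntegral.integral_nonneg_of_ae_restrict hcase ?_
      refine (ae_restrict_iff' measurableSet_Icc).2 ?_
      filter_upwards [hx', ae_ne_pt h0] with s hs hsne hsmem
      have hs2 : s ∈ Icc a.2 b.2 := ⟨le_trans hh0I.1 hsmem.1, le_trans hsmem.2 hy.2⟩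
      have hlt : h0 < s := lt_of_le_of_ne hsmem.1 (Ne.symm hsne)
      exact (hs hs2).1 hlt
    · rw [intervalIntegral.integral_symm]
      have hnp : ∫ s in y..h0, Ucurl c (x, s) ≤ 0 := by
        have hnn : 0 ≤ ∫ s in y..h0, -Ucurl c (x, s) := by
          refine intervalIntegral.integral_nonneg_of_ae_restrict hcase ?_
          refine (ae_restrict_iff' measurableSet_Icc).2 ?_
          filter_upwards [hx', ae_ne_pt h0] with s hs hsne hsmem
          have hs2 : s ∈ Icc a.2 b.2 := ⟨le_trans hy.1 hsmem.1, le_trans hsmem.2 hh0I.2⟩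
          have hlt : s < h0 := lt_of_le_of_ne hsmem.2 hsne
          exact neg_nonneg.2 ((hs hs2).2 hlt)
        rw [intervalIntegral.integral_neg] at hnn
        linarith
      linarith
  linarith [hWd, key]

end AuxProof

/-- the separating curve is an attractor: if `U ≥ 0` a.e. above the monotone
path `L` and `U ≤ 0` a.e. below it (within the rectangle `[a₁,b₁]×[a₂,b₂]`), then `L` is
optimal among all monotone paths from `a` to `b`. -/
theorem separating_curve_optimal (c : ℝ × ℝ → ℝ × ℝ) (hc : ContDiff ℝ 1 c)
    (a b : ℝ × ℝ) (hab1 : a.1 ≤ b.1) (hab2 : a.2 ≤ b.2)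
    (L : MonoPath) (hL : IsMonoPathFromTo L a b)
    (hUup : ∀ᵐ q ∂(volume.restrict (Icc a b)), hypoFun L q.1 < q.2 → 0 ≤ Ucurl c q)
    (hUlow : ∀ᵐ q ∂(volume.restrict (Icc a b)), q.2 < hypoFun L q.1 → Ucurl c q ≤ 0)
    (γ : MonoPath) (hγ : IsMonoPathFromTo γ a b) :
    pathCost c L ≤ pathCost c γ := by
  classical
  rw [cost_eq hc a b L hL, cost_eq hc a b γ hγ]
  have hm_meas := mfun_measurable hc L a b hL hab1
  obtain ⟨C, hC⟩ := mfun_bound hc L a b hL hab1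
  have hmin := ae_minimizer hc a b hab1 hab2 L hL hUup hUlow
  have hbad1 : volume ({x : ℝ | ¬∀ y ∈ Icc a.2 b.2, mfun c L a b x ≤ Wfun c a.2 (x, y)}
      ∩ Icc a.1 b.1) = 0 := by
    have h := hmin
    rw [ae_iff] at h
    rwa [Measure.restrict_apply' measurableSet_Icc] at h
  obtain ⟨N1, hsub1, hmeas1, hN1⟩ := exists_measurable_superset_of_null hbad1
  set bad2 : Set ℝ := {x | ¬ContinuousAt (hbar L a b) x} ∪ {a.1} with hbad2def
  have hbad2count : bad2.Countable :=
    ((hbar_monotone L a b hL hab1).countable_not_continuousAt).union (countable_singleton _)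
  set N : Set ℝ := N1 ∪ bad2 with hNdef
  have hNmeas : MeasurableSet N := hmeas1.union hbad2count.measurableSet
  have hN0 : volume N = 0 := measure_union_null hN1 (hbad2count.measure_zero _)
  have hγcomp := pullback_null γ a b hγ hNmeas hN0
  have hLcomp := pullback_null L a b hL hNmeas hN0
  have hrangeγ : ∀ t ∈ Icc (0:ℝ) 1, γ.f1 t ∈ Icc a.1 b.1 := fun t ht => by
    rw [γ.f1_eq ht]; exact ⟨(hγ.2.2 t ht).1.1, (hγ.2.2 t ht).2.1⟩
  have hrangeL : ∀ t ∈ Icc (0:ℝ) 1, L.f1 t ∈ Icc a.1 b.1 := fun t ht => by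
    rw [L.f1_eq ht]; exact ⟨(hL.2.2 t ht).1.1, (hL.2.2 t ht).2.1⟩
  have hγge : ∀ᵐ t ∂(volume.restrict (Ioc (0:ℝ) 1)),
      mfun c L a b (γ.f1 t) * deriv γ.f1 t ≤ Wfun c a.2 (γ.p t) * (γ.d t).1 := by
    filter_upwards [hγcomp, ae_Ioc_good γ, ae_restrict_mem measurableSet_Ioc]
      with t hNt hgood hmem
    have htI : t ∈ Icc (0:ℝ) 1 := Ioc_subset_Icc_self hmem
    have hd : deriv γ.f1 t = (γ.d t).1 := γ.deriv_f1_eq hgood.1 hgood.2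
    have hdnn : 0 ≤ (γ.d t).1 := γ.d_fst_nonneg t htI
    by_cases hmemN : γ.f1 t ∈ N
    · have h0 : (γ.d t).1 = 0 := le_antisymm (hd ▸ hNt hmemN) hdnn
      rw [hd, h0]
      simp
    · have hxI := hrangeγ t htI
      have hP : ∀ y ∈ Icc a.2 b.2, mfun c L a b (γ.f1 t) ≤ Wfun c a.2 (γ.f1 t, y) := by
        by_contra hP
        exact hmemN (Or.inl (hsub1 ⟨hP, hxI⟩))
      have hy2 : γ.f2 t ∈ Icc a.2 b.2 := by
        rw [γ.f2_eq htI]; exact ⟨(hγ.2.2 t htI).1.2, (hγ.2.2 t htI).2.2⟩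
      have hPy := hP (γ.f2 t) hy2
      have hpt : ((γ.f1 t, γ.f2 t) : ℝ × ℝ) = γ.p t := by
        rw [γ.f1_eq htI, γ.f2_eq htI]
      rw [hpt] at hPy
      rw [hd]
      exact mul_le_mul_of_nonneg_right hPy hdnn
  have hLle : ∀ᵐ t ∂(volume.restrict (Ioc (0:ℝ) 1)),
      Wfun c a.2 (L.p t) * (L.d t).1 ≤ mfun c L a b (L.f1 t) * deriv L.f1 t := by
    filter_upwards [hLcomp, ae_Ioc_good L, ae_restrict_mem measurableSet_Ioc]
      with t hNt hgood hmem
    have htI : t ∈ Icc (0:ℝ) 1 := Ioc_subset_Icc_self hmem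
    have hd : deriv L.f1 t = (L.d t).1 := L.deriv_f1_eq hgood.1 hgood.2
    have hdnn : 0 ≤ (L.d t).1 := L.d_fst_nonneg t htI
    by_cases hmemN : L.f1 t ∈ N
    · have h0 : (L.d t).1 = 0 := le_antisymm (hd ▸ hNt hmemN) hdnn
      rw [hd, h0]
      simp
    · have hxI := hrangeL t htI
      have hcontAt : ContinuousAt (hbar L a b) (L.f1 t) := by
        by_contra hcont
        exact hmemN (Or.inr (Or.inl hcont))
      have hne : L.f1 t ≠ a.1 := by
        intro h
        exact hmemN (Or.inr (Or.inr (mem_singleton_iff.2 h)))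
      have hgt : a.1 < (L.p t).1 := by
        rw [← L.f1_eq htI]
        exact lt_of_le_of_ne hxI.1 (Ne.symm hne)
      have hcontAt' : ContinuousAt (hbar L a b) (L.p t).1 := by
        rwa [← L.f1_eq htI]
      have heq : (L.p t).2 = hbar L a b (L.p t).1 := L2_eq_hbar L a b hL htI hgt hcontAt'
      have hmeq : Wfun c a.2 (L.p t) = mfun c L a b (L.f1 t) := by
        have h1 : (L.p t) = ((L.f1 t, hbar L a b (L.f1 t)) : ℝ × ℝ) := by
          refine Prod.ext ?_ ?_
          · rw [L.f1_eq htI]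
          · rw [heq, L.f1_eq htI]
        rw [h1]
        unfold mfun
        rw [clampI_eq hxI]
      rw [hmeq, hd]
  have hWγ := W_term_integrable hc a b γ hγ
  have hWL := W_term_integrable hc a b L hL
  have hmγint : IntegrableOn (fun t => mfun c L a b (γ.f1 t) * deriv γ.f1 t)
      (Ioc (0:ℝ) 1) volume := by
    refine Integrable.mono' ((γ.II_f1.1.abs).const_mul C) ?_ ?_
    · exact ((hm_meas.comp γ.continuous_f1.measurable).aestronglyMeasurable.mul
        (measurable_deriv γ.f1).aestronglyMeasurable)
    · filter_upwards with t
      rw [Real.norm_eq_abs, abs_mul]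
      exact mul_le_mul_of_nonneg_right (hC _) (abs_nonneg _)
  have hmLint : IntegrableOn (fun t => mfun c L a b (L.f1 t) * deriv L.f1 t)
      (Ioc (0:ℝ) 1) volume := by
    refine Integrable.mono' ((L.II_f1.1.abs).const_mul C) ?_ ?_
    · exact ((hm_meas.comp L.continuous_f1.measurable).aestronglyMeasurable.mul
        (measurable_deriv L.f1).aestronglyMeasurable)
    · filter_upwards with t
      rw [Real.norm_eq_abs, abs_mul]
      exact mul_le_mul_of_nonneg_right (hC _) (abs_nonneg _)
  have h1 : ∫ t in Ioc (0:ℝ) 1, Wfun c a.2 (L.p t) * (L.d t).1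
      ≤ ∫ t in Ioc (0:ℝ) 1, mfun c L a b (L.f1 t) * deriv L.f1 t :=
    integral_mono_ae hWL hmLint hLle
  have h2 : ∫ t in Ioc (0:ℝ) 1, mfun c L a b (L.f1 t) * deriv L.f1 t
      = ∫ x in Icc a.1 b.1, mfun c L a b x := subst_integral L a b hL hm_meas hC
  have h3 : ∫ t in Ioc (0:ℝ) 1, mfun c L a b (γ.f1 t) * deriv γ.f1 t
      = ∫ x in Icc a.1 b.1, mfun c L a b x := subst_integral γ a b hγ hm_meas hC
  have h4 : ∫ t in Ioc (0:ℝ) 1, mfun c L a b (γ.f1 t) * deriv γ.f1 t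
      ≤ ∫ t in Ioc (0:ℝ) 1, Wfun c a.2 (γ.p t) * (γ.d t).1 :=
    integral_mono_ae hmγint hWγ hγge
  linarith
end

section
/- (Repelling case, upper region.) Let R=[p1,q1]×[p2,q2], let f:[p1,q1]→[p2,q2] be a nondecreasing C¹ function with f(p1)=p2 and f(q1)=q2, and let c be a C¹ cost field with U≤0 a.e. on {(x,y)∈R: y>f(x)} and U≥0 a.e. on {(x,y)∈R: y<f(x)} (repelling configuration). Let a=(a1,a2), b=(b1,b2)∈R with a1≤b1, a2≤b2, a2≥f(a1) and b2≥f(b1) (both points on or above the graph of f). Then the vertical-then-horizontal two-segment path from a to b lies entirely in the closed upper region {(x,y)∈R: y≥f(x)}, and every monotone path γ from a to b satisfying γ2(t)≥f(γ1(t)) for all t (i.e., remaining in the closed upper region) has cost(γ) ≥ ∫_{a2}^{b2} c2(a1,s) ds + ∫_{a1}^{b1} c1(t,b2) dt, the cost of that two-segment path. -/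
open MeasureTheory Set


open MeasureTheory Set intervalIntegral in
/-- FTC with a finite exceptional set. -/
private lemma ftc_exc_s12 (t : Finset ℝ) : ∀ {F h : ℝ → ℝ} {u v : ℝ}, u ≤ v →
    ContinuousOn F (Icc u v) →
    (∀ x ∈ Ioo u v, x ∉ t → HasDerivAt F (h x) x) → IntervalIntegrable h volume u v →
    ∫ x in u..v, h x = F v - F u := by
  classical
  induction t using Finset.induction_on with
  | empty =>
    intro F h u v huv hF hd hi
    exact integral_eq_sub_of_hasDeriv_right_of_le huv hF
      (fun x hx => (hd x hx (Finset.notMem_empty x)).hasDerivWithinAt) hi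
  | insert a t' hat ih =>
    intro F h u v huv hF hd hi
    by_cases hmem : a ∈ Ioo u v
    · have h1 : ∫ x in u..a, h x = F a - F u := by
        have hs1 : uIcc u a ⊆ uIcc u v := by
          rw [uIcc_of_le hmem.1.le, uIcc_of_le huv]
          exact Icc_subset_Icc le_rfl hmem.2.le
        refine ih hmem.1.le (hF.mono (Icc_subset_Icc le_rfl hmem.2.le)) (fun x hx hxt => ?_)
          (hi.mono_set hs1)
        exact hd x ⟨hx.1, hx.2.trans hmem.2⟩ (by
            simp only [Finset.mem_insert, not_or]
            exact ⟨ne_of_lt hx.2, hxt⟩)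
      have h2 : ∫ x in a..v, h x = F v - F a := by
        have hs2 : uIcc a v ⊆ uIcc u v := by
          rw [uIcc_of_le hmem.2.le, uIcc_of_le huv]
          exact Icc_subset_Icc hmem.1.le le_rfl
        refine ih hmem.2.le (hF.mono (Icc_subset_Icc hmem.1.le le_rfl)) (fun x hx hxt => ?_)
          (hi.mono_set hs2)
        exact hd x ⟨hmem.1.trans hx.1, hx.2⟩ (by
            simp only [Finset.mem_insert, not_or]
            exact ⟨(ne_of_gt hx.1), hxt⟩)
      have hs1 : uIcc u a ⊆ uIcc u v := by
        rw [uIcc_of_le hmem.1.le, uIcc_of_le huv]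
        exact Icc_subset_Icc le_rfl hmem.2.le
      have hs2 : uIcc a v ⊆ uIcc u v := by
        rw [uIcc_of_le hmem.2.le, uIcc_of_le huv]
        exact Icc_subset_Icc hmem.1.le le_rfl
      have := integral_add_adjacent_intervals (hi.mono_set hs1) (hi.mono_set hs2)
      rw [← this, h1, h2]; ring
    · refine ih huv hF (fun x hx hxt => hd x hx ?_) hi
      simp only [Finset.mem_insert, not_or]
      exact ⟨fun hxa => hmem (hxa ▸ hx), hxt⟩

open MeasureTheory Set intervalIntegral in
/-- Automatic integrability of a nonnegative derivative, finite exceptional set. -/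
private lemma intg_exc (t : Finset ℝ) : ∀ {F h : ℝ → ℝ} {u v : ℝ}, u ≤ v →
    ContinuousOn F (Icc u v) →
    (∀ x ∈ Ioo u v, x ∉ t → HasDerivAt F (h x) x) → (∀ x ∈ Ioo u v, 0 ≤ h x) →
    IntegrableOn h (Ioc u v) := by
  classical
  induction t using Finset.induction_on with
  | empty =>
    intro F h u v huv hF hd hpos
    exact integrableOn_deriv_of_nonneg hF (fun x hx => hd x hx (Finset.notMem_empty x)) hpos
  | insert a t' hat ih =>
    intro F h u v huv hF hd hpos
    by_cases hmem : a ∈ Ioo u v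
    · have h1 : IntegrableOn h (Ioc u a) := by
        refine ih hmem.1.le (hF.mono (Icc_subset_Icc le_rfl hmem.2.le)) (fun x hx hxt => ?_)
          (fun x hx => hpos x ⟨hx.1, hx.2.trans hmem.2⟩)
        exact hd x ⟨hx.1, hx.2.trans hmem.2⟩ (by
          simp only [Finset.mem_insert, not_or]; exact ⟨ne_of_lt hx.2, hxt⟩)
      have h2 : IntegrableOn h (Ioc a v) := by
        refine ih hmem.2.le (hF.mono (Icc_subset_Icc hmem.1.le le_rfl)) (fun x hx hxt => ?_)
          (fun x hx => hpos x ⟨hmem.1.trans hx.1, hx.2⟩)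
        exact hd x ⟨hmem.1.trans hx.1, hx.2⟩ (by
          simp only [Finset.mem_insert, not_or]; exact ⟨ne_of_gt hx.1, hxt⟩)
      have hsub : Ioc u v ⊆ Ioc u a ∪ Ioc a v := by
        rw [Ioc_union_Ioc_eq_Ioc hmem.1.le hmem.2.le]
      exact (h1.union h2).mono_set hsub
    · refine ih huv hF (fun x hx hxt => hd x hx ?_) hpos
      simp only [Finset.mem_insert, not_or]
      exact ⟨fun hxa => hmem (hxa ▸ hx), hxt⟩

open MeasureTheory Set intervalIntegral in
/-- Fubini for continuous functions on interval integrals (outer pair oriented). -/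
private lemma swap_int {h : ℝ × ℝ → ℝ} (hc : Continuous h) (x₀ x y B : ℝ) (hyB : y ≤ B) :
    ∫ s in y..B, (∫ u in x₀..x, h (u, s)) = ∫ u in x₀..x, (∫ s in y..B, h (u, s)) := by
  have key : ∀ (α' β' : ℝ), α' ≤ β' →
      ∫ s in y..B, (∫ u in α'..β', h (u, s)) = ∫ u in α'..β', (∫ s in y..B, h (u, s)) := by
    intro α' β' hab'
    rw [integral_of_le hyB, integral_of_le hab']
    simp_rw [integral_of_le hyB, integral_of_le hab']
    have hint : Integrable (fun z : ℝ × ℝ => h (z.2, z.1))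
        ((volume.restrict (Ioc y B)).prod (volume.restrict (Ioc α' β'))) := by
      rw [Measure.prod_restrict]
      have hbig : IntegrableOn (fun z : ℝ × ℝ => h (z.2, z.1)) (Icc y B ×ˢ Icc α' β') := by
        exact ((hc.comp continuous_swap).continuousOn).integrableOn_compact
          (isCompact_Icc.prod isCompact_Icc)
      exact hbig.mono_set (Set.prod_mono Ioc_subset_Icc_self Ioc_subset_Icc_self)
    exact integral_integral_swap hint
  rcases le_total x₀ x with hx | hx
  · exact key _ _ hx
  · have k2 := key x x₀ hx
    rw [integral_symm x x₀, ← k2, ← intervalIntegral.integral_neg]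
    refine integral_congr fun s _ => ?_
    exact integral_symm x x₀

open MeasureTheory Set intervalIntegral in
/-- Fubini for continuous functions on interval integrals, unoriented. -/
private lemma swap_int' {h : ℝ × ℝ → ℝ} (hcont : Continuous h) (x₀ x y B : ℝ) :
    ∫ s in y..B, (∫ u in x₀..x, h (u, s)) = ∫ u in x₀..x, (∫ s in y..B, h (u, s)) := by
  rcases le_total y B with hy | hy
  · exact swap_int hcont x₀ x y B hy
  · have k2 := swap_int hcont x₀ x B y hy
    rw [integral_symm B y, k2, ← intervalIntegral.integral_neg]
    refine integral_congr fun u _ => (integral_symm B y).symm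

open MeasureTheory Set intervalIntegral Asymptotics in
/-- "Freeze" Fréchet derivative of a partially-frozen parametric integral at its base point. -/
private lemma hasFDerivAt_freeze {G : ℝ × ℝ → ℝ} (hG : Continuous G) (x₀ y₀ : ℝ) :
    HasFDerivAt (fun q : ℝ × ℝ => ∫ u in x₀..q.1, G (u, q.2))
      (G (x₀, y₀) • (ContinuousLinearMap.fst ℝ ℝ ℝ)) (x₀, y₀) := by
  rw [hasFDerivAt_iff_isLittleO_nhds_zero]
  rw [isLittleO_iff]
  intro ε hε
  obtain ⟨δ, hδ, hball⟩ := Metric.continuousAt_iff.1 (hG.continuousAt (x := (x₀, y₀))) ε hε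
  have hmem : Metric.ball (0 : ℝ × ℝ) δ ∈ nhds (0 : ℝ × ℝ) := Metric.ball_mem_nhds _ hδ
  filter_upwards [hmem] with h hh
  have hint1 : IntervalIntegrable (fun u => G (u, y₀ + h.2)) volume x₀ (x₀ + h.1) :=
    (hG.comp (continuous_id.prodMk continuous_const)).intervalIntegrable _ _
  have e3 : (G (x₀, y₀) • (ContinuousLinearMap.fst ℝ ℝ ℝ)) h = G (x₀, y₀) * h.1 := rfl
  simp only [Prod.fst_add, Prod.snd_add, intervalIntegral.integral_same, sub_zero, e3]
  have e4 : (∫ u in x₀..(x₀ + h.1), G (u, y₀ + h.2)) - G (x₀, y₀) * h.1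
      = ∫ u in x₀..(x₀ + h.1), (G (u, y₀ + h.2) - G (x₀, y₀)) := by
    rw [intervalIntegral.integral_sub hint1 (intervalIntegrable_const)]
    simp [intervalIntegral.integral_const]
    ring
  rw [e4]
  have hb : ∀ u ∈ Set.uIoc x₀ (x₀ + h.1), ‖G (u, y₀ + h.2) - G (x₀, y₀)‖ ≤ ε := by
    intro u hu
    have hu1 : |u - x₀| ≤ |h.1| := by
      rcases le_total x₀ (x₀ + h.1) with hc1 | hc1
      · rw [uIoc_of_le hc1] at hu
        have := hu.1; have := hu.2
        rw [abs_le]; constructor <;> [linarith [abs_nonneg h.1]; skip]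
        have : u ≤ x₀ + h.1 := hu.2
        have h1 : h.1 ≤ |h.1| := le_abs_self _
        linarith
      · rw [uIoc_of_ge hc1] at hu
        have := hu.1; have := hu.2
        rw [abs_le]
        have h1 : -|h.1| ≤ h.1 := neg_abs_le _
        constructor <;> linarith
    have hd : dist (u, y₀ + h.2) (x₀, y₀) < δ := by
      rw [Prod.dist_eq]
      have h2 : dist (y₀ + h.2) y₀ = |h.2| := by rw [Real.dist_eq]; ring_nf
      have h3 : dist u x₀ = |u - x₀| := Real.dist_eq _ _
      have hn : max |h.1| |h.2| < δ := by
        have := hh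
        rw [Metric.mem_ball, dist_zero_right, Prod.norm_def] at this
        simpa [Real.norm_eq_abs] using this
      rw [h2, h3]
      exact max_lt (lt_of_le_of_lt (hu1.trans (le_max_left _ _)) hn)
        (lt_of_le_of_lt (le_max_right _ _) hn)
    exact (le_of_lt (by simpa [dist_eq_norm] using hball hd))
  calc ‖∫ u in x₀..(x₀ + h.1), (G (u, y₀ + h.2) - G (x₀, y₀))‖
      ≤ ε * |x₀ + h.1 - x₀| := intervalIntegral.norm_integral_le_of_norm_le_const hb
    _ ≤ ε * ‖h‖ := by
        have he : |x₀ + h.1 - x₀| = |h.1| := by ring_nf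
        rw [he]
        have hle : |h.1| ≤ ‖h‖ := by
          rw [Prod.norm_def]; exact le_max_left _ _ |>.trans_eq' (Real.norm_eq_abs h.1).symm
        nlinarith [le_of_lt hε]

/-- `∂c₂/∂x₁` as a function. -/
noncomputable def gxP (c : ℝ × ℝ → ℝ × ℝ) : ℝ × ℝ → ℝ := fun q => ((fderiv ℝ c q) (1, 0)).2
/-- `∂c₁/∂x₂` as a function. -/
noncomputable def gyP (c : ℝ × ℝ → ℝ × ℝ) : ℝ × ℝ → ℝ := fun q => ((fderiv ℝ c q) (0, 1)).1

private lemma gx_cont {c : ℝ × ℝ → ℝ × ℝ} (hc : ContDiff ℝ 1 c) : Continuous (gxP c) :=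
  (continuous_snd.comp ((hc.continuous_fderiv one_ne_zero).clm_apply continuous_const))

private lemma gy_cont {c : ℝ × ℝ → ℝ × ℝ} (hc : ContDiff ℝ 1 c) : Continuous (gyP c) :=
  (continuous_fst.comp ((hc.continuous_fderiv one_ne_zero).clm_apply continuous_const))

private lemma hd_x {c : ℝ × ℝ → ℝ × ℝ} (hc : ContDiff ℝ 1 c) (x s : ℝ) :
    HasDerivAt (fun u => (c (u, s)).2) (gxP c (x, s)) x := by
  have hbase : HasDerivAt (fun u : ℝ => c (u, s)) ((fderiv ℝ c (x, s)) (1, 0)) x := by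
    have h1 : HasDerivAt (fun u : ℝ => ((u, s) : ℝ × ℝ)) ((1 : ℝ), (0 : ℝ)) x :=
      (hasDerivAt_id x).prodMk (hasDerivAt_const x s)
    exact ((hc.differentiable one_ne_zero (x, s)).hasFDerivAt.comp_hasDerivAt x h1)
  exact ((ContinuousLinearMap.snd ℝ ℝ ℝ).hasFDerivAt.comp_hasDerivAt x hbase)

private lemma hd_y {c : ℝ × ℝ → ℝ × ℝ} (hc : ContDiff ℝ 1 c) (x s : ℝ) :
    HasDerivAt (fun y => (c (x, y)).1) (gyP c (x, s)) s := by
  have hbase : HasDerivAt (fun y : ℝ => c (x, y)) ((fderiv ℝ c (x, s)) (0, 1)) s := by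
    have h1 : HasDerivAt (fun y : ℝ => ((x, y) : ℝ × ℝ)) ((0 : ℝ), (1 : ℝ)) s :=
      (hasDerivAt_const s x).prodMk (hasDerivAt_id s)
    exact ((hc.differentiable one_ne_zero (x, s)).hasFDerivAt.comp_hasDerivAt s h1)
  exact ((ContinuousLinearMap.fst ℝ ℝ ℝ).hasFDerivAt.comp_hasDerivAt s hbase)

open MeasureTheory Set intervalIntegral in
/-- Continuity of a parametric primitive with moving lower endpoint. -/
private lemma cont_param {g : ℝ × ℝ → ℝ} (hg : Continuous g) (B : ℝ) :
    Continuous fun q : ℝ × ℝ => ∫ s in q.2..B, g (q.1, s) := by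
  have h1 : Continuous fun p : ℝ × ℝ => ∫ t in B..p.2, g (p.1, t) :=
    intervalIntegral.continuous_parametric_primitive_of_continuous (f := fun x s => g (x, s))
      (μ := volume) (a₀ := B) (by exact hg)
  have h2 := h1.neg
  convert h2 using 2 with q
  exact integral_symm B q.2

open MeasureTheory Set intervalIntegral in
/-- The derivative of `t ↦ F(γ(t))` where `F` is the cost of the up-then-right path
to `(b1, B)`. -/
private lemma phi_deriv {c : ℝ × ℝ → ℝ × ℝ} (hc : ContDiff ℝ 1 c) (B b1 : ℝ)
    {γp : ℝ → ℝ × ℝ} {dd : ℝ × ℝ} {t₀ : ℝ}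
    (h1 : HasDerivAt (fun u => (γp u).1) dd.1 t₀)
    (h2 : HasDerivAt (fun u => (γp u).2) dd.2 t₀) :
    HasDerivAt (fun t => (∫ s in (γp t).2..B, (c ((γp t).1, s)).2)
        + ∫ u in (γp t).1..b1, (c (u, B)).1)
      ((∫ s in (γp t₀).2..B, gxP c ((γp t₀).1, s)) * dd.1
        - (c (γp t₀)).2 * dd.2 - (c ((γp t₀).1, B)).1 * dd.1) t₀ := by
  set x₀ := (γp t₀).1 with hx₀
  set y₀ := (γp t₀).2 with hy₀
  have hγ : HasDerivAt γp dd t₀ := by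
    have := h1.prodMk h2
    simpa using this
  have hid : ∀ t, (∫ s in (γp t).2..B, (c ((γp t).1, s)).2)
      = (∫ u in x₀..(γp t).1, ∫ s in (γp t).2..B, gxP c (u, s))
        + ∫ s in (γp t).2..B, (c (x₀, s)).2 := by
    intro t
    have hfe : ∀ s : ℝ, (c ((γp t).1, s)).2 - (c (x₀, s)).2
        = ∫ u in x₀..(γp t).1, gxP c (u, s) := by
      intro s
      refine (integral_eq_sub_of_hasDerivAt (fun u _ => hd_x hc u s) ?_).symm
      exact ((gx_cont hc).comp (continuous_id.prodMk continuous_const)).intervalIntegrable _ _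
    have hint1 : IntervalIntegrable (fun s => (c ((γp t).1, s)).2) volume (γp t).2 B :=
      ((continuous_snd.comp hc.continuous).comp
        (continuous_const.prodMk continuous_id)).intervalIntegrable _ _
    have hint2 : IntervalIntegrable (fun s => (c (x₀, s)).2) volume (γp t).2 B :=
      ((continuous_snd.comp hc.continuous).comp
        (continuous_const.prodMk continuous_id)).intervalIntegrable _ _
    have e1 : (∫ s in (γp t).2..B, (c ((γp t).1, s)).2) - ∫ s in (γp t).2..B, (c (x₀, s)).2
        = ∫ s in (γp t).2..B, ((c ((γp t).1, s)).2 - (c (x₀, s)).2) :=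
      (intervalIntegral.integral_sub hint1 hint2).symm
    have e2 : ∫ s in (γp t).2..B, ((c ((γp t).1, s)).2 - (c (x₀, s)).2)
        = ∫ s in (γp t).2..B, (∫ u in x₀..(γp t).1, gxP c (u, s)) :=
      integral_congr fun s _ => hfe s
    have e3 := swap_int' (gx_cont hc) x₀ (γp t).1 (γp t).2 B
    linarith [e1, e2, e3]
  have hfun : (fun t => (∫ s in (γp t).2..B, (c ((γp t).1, s)).2)
        + ∫ u in (γp t).1..b1, (c (u, B)).1)
      = fun t => ((∫ u in x₀..(γp t).1, ∫ s in (γp t).2..B, gxP c (u, s))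
        + ∫ s in (γp t).2..B, (c (x₀, s)).2) + ∫ u in (γp t).1..b1, (c (u, B)).1 :=
    funext fun t => by rw [hid t]
  rw [hfun]
  have hGc : Continuous fun q : ℝ × ℝ => ∫ s in q.2..B, gxP c (q.1, s) :=
    cont_param (gx_cont hc) B
  have hBder : HasDerivAt (fun t => ∫ u in x₀..(γp t).1, ∫ s in (γp t).2..B, gxP c (u, s))
      ((∫ s in y₀..B, gxP c (x₀, s)) * dd.1) t₀ := by
    have hfr := (hasFDerivAt_freeze hGc x₀ y₀).comp_hasDerivAt t₀ (by simpa using hγ)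
    simp at hfr; exact hfr
  have hCder : HasDerivAt (fun t => ∫ s in (γp t).2..B, (c (x₀, s)).2)
      (-(c (x₀, y₀)).2 * dd.2) t₀ := by
    have hf : Continuous fun s => (c (x₀, s)).2 :=
      (continuous_snd.comp hc.continuous).comp (continuous_const.prodMk continuous_id)
    have hK : HasDerivAt (fun y => ∫ s in y..B, (c (x₀, s)).2) (-(c (x₀, y₀)).2) y₀ :=
      integral_hasDerivAt_left (hf.intervalIntegrable _ _)
        (hf.stronglyMeasurableAtFilter _ _) hf.continuousAt
    exact hK.comp t₀ h2
  have hDder : HasDerivAt (fun t => ∫ u in (γp t).1..b1, (c (u, B)).1)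
      (-(c (x₀, B)).1 * dd.1) t₀ := by
    have hf : Continuous fun u => (c (u, B)).1 :=
      (continuous_fst.comp hc.continuous).comp (continuous_id.prodMk continuous_const)
    have hK : HasDerivAt (fun x => ∫ u in x..b1, (c (u, B)).1) (-(c (x₀, B)).1) x₀ :=
      integral_hasDerivAt_left (hf.intervalIntegrable _ _)
        (hf.stronglyMeasurableAtFilter _ _) hf.continuousAt
    exact hK.comp t₀ h1
  have := (hBder.add hCder).add hDder
  convert this using 1
  case e'_4 => rfl
  case e'_5 => rfl
  case e'_8 => rfl
  have he : c (γp t₀) = c (x₀, y₀) := by rw [hx₀, hy₀]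
  rw [he]
  ring


private lemma ucurl_eq {c : ℝ × ℝ → ℝ × ℝ} (hc : ContDiff ℝ 1 c) (q : ℝ × ℝ) :
    Ucurl c q = gyP c q - gxP c q := by
  have h1 := (hd_y hc q.1 q.2).deriv
  have h2 := (hd_x hc q.1 q.2).deriv
  rw [Ucurl, h1, h2]

private lemma ucurl_cont {c : ℝ × ℝ → ℝ × ℝ} (hc : ContDiff ℝ 1 c) : Continuous (Ucurl c) := by
  have h : Ucurl c = fun q => gyP c q - gxP c q := funext fun q => ucurl_eq hc q
  rw [h]
  exact (gy_cont hc).sub (gx_cont hc)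

/-- repelling configuration, both endpoints on or above the curve `f`:
the vertical-then-horizontal two-segment path stays in the closed upper region, and it is
optimal among monotone paths remaining in the closed upper region. -/
theorem repelling_upper (p1 q1 p2 q2 : ℝ) (hp1 : p1 ≤ q1) (hp2 : p2 ≤ q2)
    (f : ℝ → ℝ) (hf : ContDiffOn ℝ 1 f (Icc p1 q1)) (hfmono : MonotoneOn f (Icc p1 q1))
    (hfmaps : ∀ t ∈ Icc p1 q1, f t ∈ Icc p2 q2) (hfp : f p1 = p2) (hfq : f q1 = q2)
    (c : ℝ × ℝ → ℝ × ℝ) (hc : ContDiff ℝ 1 c)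
    (hUup : ∀ᵐ q ∂(volume.restrict
      {q : ℝ × ℝ | q ∈ Icc p1 q1 ×ˢ Icc p2 q2 ∧ f q.1 < q.2}), Ucurl c q ≤ 0)
    (hUlow : ∀ᵐ q ∂(volume.restrict
      {q : ℝ × ℝ | q ∈ Icc p1 q1 ×ˢ Icc p2 q2 ∧ q.2 < f q.1}), 0 ≤ Ucurl c q)
    (a b : ℝ × ℝ) (ha : a ∈ Icc p1 q1 ×ˢ Icc p2 q2) (hb : b ∈ Icc p1 q1 ×ˢ Icc p2 q2)
    (hab1 : a.1 ≤ b.1) (hab2 : a.2 ≤ b.2)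
    (haup : f a.1 ≤ a.2) (hbup : f b.1 ≤ b.2) :
    ((∀ y ∈ Icc a.2 b.2, f a.1 ≤ y) ∧ (∀ x ∈ Icc a.1 b.1, f x ≤ b.2)) ∧
      ∀ γ : MonoPath, IsMonoPathFromTo γ a b →
        (∀ t ∈ Icc (0:ℝ) 1, f (γ.p t).1 ≤ (γ.p t).2) →
        (∫ s in a.2..b.2, (c (a.1, s)).2) + (∫ t in a.1..b.1, (c (t, b.2)).1) ≤
          pathCost c γ := by
  classical
  have hsub1 : Icc a.1 b.1 ⊆ Icc p1 q1 :=
    Icc_subset_Icc ha.1.1 hb.1.2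
  have hfbd : ∀ x ∈ Icc a.1 b.1, f x ≤ b.2 := by
    intro x hx
    exact le_trans (hfmono (hsub1 hx) hb.1 hx.2) hbup
  refine ⟨⟨fun y hy => le_trans haup hy.1, hfbd⟩, ?_⟩
  intro γ hγ hup
  obtain ⟨hγ0, hγ1, hγmem⟩ := hγ
  have hmem1 : ∀ t ∈ Icc (0:ℝ) 1, (γ.p t).1 ∈ Icc a.1 b.1 :=
    fun t ht => ⟨((hγmem t ht).1).1, ((hγmem t ht).2).1⟩
  have hmem2 : ∀ t ∈ Icc (0:ℝ) 1, (γ.p t).2 ∈ Icc a.2 b.2 :=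
    fun t ht => ⟨((hγmem t ht).1).2, ((hγmem t ht).2).2⟩
  -- the auxiliary field W
  set g0 : ℝ × ℝ → ℝ := fun r => gxP c r - gyP c r with hg0
  have hg0c : Continuous g0 := (gx_cont hc).sub (gy_cont hc)
  set W : ℝ × ℝ → ℝ := fun q => ∫ s in q.2..b.2, g0 (q.1, s) with hWdef
  have hWcont : Continuous W := cont_param hg0c b.2
  -- W is -∫ Ucurl
  have hWU : ∀ x y : ℝ, W (x, y) = - ∫ s in y..b.2, Ucurl c (x, s) := by
    intro x y
    rw [hWdef, ← intervalIntegral.integral_neg]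
    refine intervalIntegral.integral_congr fun s _ => ?_
    rw [ucurl_eq hc (x, s), hg0]
    ring
  -- the slice sets are a.e. null
  have hEmeas : MeasurableSet {q : ℝ × ℝ | 0 < Ucurl c q} :=
    (isOpen_lt continuous_const (ucurl_cont hc)).measurableSet
  have hE0 : volume ({q : ℝ × ℝ | 0 < Ucurl c q}
      ∩ {q : ℝ × ℝ | q ∈ Icc p1 q1 ×ˢ Icc p2 q2 ∧ f q.1 < q.2}) = 0 := by
    have h1 := hUup
    rw [ae_iff] at h1
    have h2 : {q : ℝ × ℝ | ¬ Ucurl c q ≤ 0} = {q : ℝ × ℝ | 0 < Ucurl c q} := by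
      ext q; simp [not_le]
    rw [h2, Measure.restrict_apply hEmeas] at h1
    exact h1
  obtain ⟨T, hTsub, hTmeas, hT0⟩ := exists_measurable_superset_of_null hE0
  have hslice : ∀ᵐ x : ℝ, volume (Prod.mk x ⁻¹' T) = 0 := by
    have hprod : (volume.prod volume) T = 0 := by
      rw [← MeasureTheory.Measure.volume_eq_prod]; exact hT0
    have := (MeasureTheory.Measure.measure_prod_null hTmeas).1 hprod
    filter_upwards [this] with x hx using hx
  -- good vertical slices give nonnegativity of W
  have hgood : ∀ x, volume (Prod.mk x ⁻¹' T) = 0 → x ∈ Icc a.1 b.1 →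
      ∀ y, f x ≤ y → a.2 ≤ y → y ≤ b.2 → 0 ≤ W (x, y) := by
    intro x hx hxab y hfy hay hyb
    rw [hWU x y, neg_nonneg]
    rw [← neg_nonneg, ← intervalIntegral.integral_neg]
    refine intervalIntegral.integral_nonneg_of_ae_restrict hyb ?_
    have h1 : ∀ᵐ s : ℝ, (x, s) ∉ T := by
      have : volume {s : ℝ | (x, s) ∈ T} = 0 := hx
      exact measure_eq_zero_iff_ae_notMem.1 this
    have h2 : ∀ᵐ s : ℝ, s ≠ f x := by
      have : volume ({f x} : Set ℝ) = 0 := measure_singleton _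
      filter_upwards [measure_eq_zero_iff_ae_notMem.1 this] with s hs using
        fun h => hs (by simp [h])
    filter_upwards [ae_restrict_mem measurableSet_Icc, ae_restrict_of_ae h1,
      ae_restrict_of_ae h2] with s hsmem hsT hsne
    have hfx : f x < s := lt_of_le_of_ne (hfy.trans hsmem.1) (Ne.symm hsne)
    have hsS : (x, s) ∈ {q : ℝ × ℝ | q ∈ Icc p1 q1 ×ˢ Icc p2 q2 ∧ f q.1 < q.2} := by
      refine ⟨⟨hsub1 hxab, ⟨ha.2.1.trans (hay.trans hsmem.1), hsmem.2.trans hb.2.2⟩⟩, hfx⟩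
    have hUs : ¬ 0 < Ucurl c (x, s) := by
      intro hpos
      exact hsT (hTsub ⟨hpos, hsS⟩)
    simp only [Pi.zero_apply, neg_nonneg]  -- goal : 0 ≤ -Ucurl ... adjust
    linarith [not_lt.1 hUs]
  -- nonnegativity of W on the closed upper region over [a1,b1] (density argument)
  have hWK : a.1 < b.1 → ∀ q : ℝ × ℝ, q ∈ Icc a b → f q.1 ≤ q.2 → 0 ≤ W q := by
    intro hlt q₀ hq₀ hfq₀
    by_contra hneg
    push_neg at hneg
    have hq₀1 : q₀.1 ∈ Icc a.1 b.1 := ⟨hq₀.1.1, hq₀.2.1⟩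
    set ρ : ℝ → ℝ := fun x => W (x, max q₀.2 (f x)) with hρdef
    have hρ : ContinuousOn ρ (Icc a.1 b.1) := by
      refine hWcont.comp_continuousOn ?_
      exact continuousOn_id.prodMk (continuousOn_const.sup ((hf.continuousOn).mono hsub1))
    have hval : ρ q₀.1 < 0 := by
      have hm : max q₀.2 (f q₀.1) = q₀.2 := max_eq_left hfq₀
      rw [hρdef]
      simp only [hm]
      simpa using hneg
    have hpre : ρ ⁻¹' (Iio 0) ∈ nhdsWithin q₀.1 (Icc a.1 b.1) :=
      (hρ q₀.1 hq₀1) (Iio_mem_nhds hval)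
    obtain ⟨U, hUopen, hq₀U, hUsub⟩ := mem_nhdsWithin.1 hpre
    obtain ⟨δ, hδ, hball⟩ := Metric.isOpen_iff.1 hUopen q₀.1 hq₀U
    set u := max a.1 (q₀.1 - δ) with hu
    set v := min b.1 (q₀.1 + δ) with hv
    have huv : u < v := by
      rw [hu, hv]
      apply max_lt <;> apply lt_min
      · exact hlt
      · linarith [hq₀1.1]
      · linarith [hq₀1.2]
      · linarith
    have hIoosub : Ioo u v ⊆ Metric.ball q₀.1 δ ∩ Icc a.1 b.1 := by
      intro x hx
      constructor
      · rw [Metric.mem_ball, Real.dist_eq, abs_lt]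
        constructor
        · have := hx.1; rw [hu] at this
          have := lt_of_le_of_lt (le_max_right a.1 (q₀.1 - δ)) this
          linarith
        · have := hx.2; rw [hv] at this
          have := lt_of_lt_of_le this (min_le_right b.1 (q₀.1 + δ))
          linarith
      · constructor
        · exact le_of_lt (lt_of_le_of_lt (le_max_left _ _) hx.1)
        · exact le_of_lt (lt_of_lt_of_le hx.2 (min_le_left _ _))
    have hbad : volume {x : ℝ | ¬ volume (Prod.mk x ⁻¹' T) = 0} = 0 := by
      rw [← ae_iff] at *
      exact hslice
    have hex : ∃ x ∈ Ioo u v, volume (Prod.mk x ⁻¹' T) = 0 := by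
      by_contra hno
      push_neg at hno
      have hsubbad : Ioo u v ⊆ {x : ℝ | ¬ volume (Prod.mk x ⁻¹' T) = 0} :=
        fun x hx => hno x hx
      have h1 : volume (Ioo u v) = 0 := le_antisymm
        ((measure_mono hsubbad).trans hbad.le) zero_le
      rw [Real.volume_Ioo] at h1
      have := ENNReal.ofReal_pos.2 (sub_pos.2 huv)
      rw [h1] at this
      exact lt_irrefl _ this
    obtain ⟨x, hxIoo, hxgood⟩ := hex
    have hxmem := hIoosub hxIoo
    have hxIcc : x ∈ Icc a.1 b.1 := hxmem.2
    have hρx : ρ x < 0 := hUsub ⟨hball hxmem.1, hxIcc⟩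
    have h0 : 0 ≤ ρ x := by
      rw [hρdef]
      refine hgood x hxgood hxIcc (max q₀.2 (f x)) (le_max_right _ _)
        (hq₀.1.2.trans (le_max_left _ _)) (max_le hq₀.2.2 (hfbd x hxIcc))
    linarith
  -- the potential function and integrands
  set φ : ℝ → ℝ := fun t => (∫ s in (γ.p t).2..b.2, (c ((γ.p t).1, s)).2)
      + ∫ u in (γ.p t).1..b.1, (c (u, b.2)).1 with hφdef
  set w : ℝ → ℝ := fun t => W (γ.p t) * (γ.d t).1 with hwdef
  set gg : ℝ → ℝ := fun t => (c (γ.p t)).1 * (γ.d t).1 + (c (γ.p t)).2 * (γ.d t).2 with hggdef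
  -- derivative of φ off the exceptional set
  have hder : ∀ t ∈ Ioo (0:ℝ) 1, t ∉ γ.exc_finite.toFinset → HasDerivAt φ (w t - gg t) t := by
    intro t ht htexc
    have htIcc : t ∈ Icc (0:ℝ) 1 \ γ.exc :=
      ⟨Ioo_subset_Icc_self ht, by simpa using htexc⟩
    have h1 := γ.deriv_fst t htIcc
    have h2 := γ.deriv_snd t htIcc
    have hmain := phi_deriv hc b.2 b.1 (γp := γ.p) (dd := γ.d t) h1 h2
    have hftc : (c ((γ.p t).1, b.2)).1 - (c ((γ.p t).1, (γ.p t).2)).1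
        = ∫ s in (γ.p t).2..b.2, gyP c ((γ.p t).1, s) := by
      refine (intervalIntegral.integral_eq_sub_of_hasDerivAt
        (fun s _ => hd_y hc (γ.p t).1 s) ?_).symm
      exact ((gy_cont hc).comp (continuous_const.prodMk continuous_id)).intervalIntegrable _ _
    have hsplit : W (γ.p t) = (∫ s in (γ.p t).2..b.2, gxP c ((γ.p t).1, s))
        - ∫ s in (γ.p t).2..b.2, gyP c ((γ.p t).1, s) := by
      rw [hWdef, hg0]
      exact intervalIntegral.integral_sub
        (((gx_cont hc).comp (continuous_const.prodMk continuous_id)).intervalIntegrable _ _)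
        (((gy_cont hc).comp (continuous_const.prodMk continuous_id)).intervalIntegrable _ _)
    convert hmain using 1
    rw [hwdef, hggdef]
    simp only
    rw [hsplit, ← hftc]
    have heta : c ((γ.p t).1, (γ.p t).2) = c (γ.p t) := by rw [Prod.mk.eta]
    rw [heta]
    ring
  -- continuity of φ on [0,1]
  have hφc : ContinuousOn φ (Icc (0:ℝ) 1) := by
    have hF1 : Continuous fun q : ℝ × ℝ => ∫ s in q.2..b.2, (c (q.1, s)).2 :=
      cont_param (continuous_snd.comp hc.continuous) b.2
    have hcont1 : Continuous fun u : ℝ => (c (u, b.2)).1 :=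
      (continuous_fst.comp hc.continuous).comp (continuous_id.prodMk continuous_const)
    have h1 : Continuous fun x : ℝ => ∫ u in b.1..x, (c (u, b.2)).1 :=
      intervalIntegral.continuous_primitive (fun u v => hcont1.intervalIntegrable u v) b.1
    have h2 : Continuous fun x : ℝ => ∫ u in x..b.1, (c (u, b.2)).1 := by
      have hn := h1.neg
      convert hn using 2 with x
      exact intervalIntegral.integral_symm b.1 x
    have hF2 : ContinuousOn (fun t => ∫ u in (γ.p t).1..b.1, (c (u, b.2)).1)
        (Icc (0:ℝ) 1) :=
      h2.comp_continuousOn (continuous_fst.comp_continuousOn γ.cont)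
    exact (hF1.comp_continuousOn γ.cont).add hF2
  -- integrability of the coordinate derivatives
  have hd1int : IntegrableOn (fun t => (γ.d t).1) (Ioc (0:ℝ) 1) := by
    refine intg_exc γ.exc_finite.toFinset zero_le_one
      (continuous_fst.comp_continuousOn γ.cont) (fun x hx hxt => ?_)
      (fun x hx => γ.d_fst_nonneg x (Ioo_subset_Icc_self hx))
    exact γ.deriv_fst x ⟨Ioo_subset_Icc_self hx, by simpa using hxt⟩
  have hd2int : IntegrableOn (fun t => (γ.d t).2) (Ioc (0:ℝ) 1) := by
    refine intg_exc γ.exc_finite.toFinset zero_le_one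
      (continuous_snd.comp_continuousOn γ.cont) (fun x hx hxt => ?_)
      (fun x hx => γ.d_snd_nonneg x (Ioo_subset_Icc_self hx))
    exact γ.deriv_snd x ⟨Ioo_subset_Icc_self hx, by simpa using hxt⟩
  -- bounds along the path
  obtain ⟨C1, hC1⟩ := isCompact_Icc.exists_bound_of_continuousOn
    (hWcont.comp_continuousOn γ.cont)
  obtain ⟨C2, hC2⟩ := isCompact_Icc.exists_bound_of_continuousOn
    (hc.continuous.comp_continuousOn γ.cont)
  -- integrability of w and gg
  have hwint : IntervalIntegrable w volume 0 1 := by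
    rw [intervalIntegrable_iff, uIoc_of_le (zero_le_one : (0:ℝ) ≤ 1)]
    refine Integrable.mono' (hd1int.const_mul C1) ?_ ?_
    · exact (((hWcont.comp_continuousOn γ.cont).mono Ioc_subset_Icc_self).aestronglyMeasurable
        measurableSet_Ioc).mul hd1int.aestronglyMeasurable
    · filter_upwards [ae_restrict_mem measurableSet_Ioc] with t ht
      have h1 := hC1 t (Ioc_subset_Icc_self ht)
      have h2 := γ.d_fst_nonneg t (Ioc_subset_Icc_self ht)
      rw [hwdef]
      simp only [Real.norm_eq_abs, abs_mul]
      rw [abs_of_nonneg h2]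
      refine mul_le_mul_of_nonneg_right ?_ h2
      simpa [Real.norm_eq_abs] using h1
  have hggint : IntervalIntegrable gg volume 0 1 := by
    rw [intervalIntegrable_iff, uIoc_of_le (zero_le_one : (0:ℝ) ≤ 1)]
    refine Integrable.mono' ((hd1int.const_mul C2).add (hd2int.const_mul C2)) ?_ ?_
    · have hm1 : AEStronglyMeasurable (fun t => (c (γ.p t)).1)
          (volume.restrict (Ioc (0:ℝ) 1)) :=
        (((continuous_fst.comp hc.continuous).comp_continuousOn γ.cont).mono
          Ioc_subset_Icc_self).aestronglyMeasurable measurableSet_Ioc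
      have hm2 : AEStronglyMeasurable (fun t => (c (γ.p t)).2)
          (volume.restrict (Ioc (0:ℝ) 1)) :=
        (((continuous_snd.comp hc.continuous).comp_continuousOn γ.cont).mono
          Ioc_subset_Icc_self).aestronglyMeasurable measurableSet_Ioc
      exact (hm1.mul hd1int.aestronglyMeasurable).add (hm2.mul hd2int.aestronglyMeasurable)
    · filter_upwards [ae_restrict_mem measurableSet_Ioc] with t ht
      have h1 := hC2 t (Ioc_subset_Icc_self ht)
      have hp1 := γ.d_fst_nonneg t (Ioc_subset_Icc_self ht)
      have hp2 := γ.d_snd_nonneg t (Ioc_subset_Icc_self ht)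
      have hb1 : |(c (γ.p t)).1| ≤ C2 :=
        le_trans (by simpa [Real.norm_eq_abs] using norm_fst_le (c (γ.p t))) h1
      have hb2 : |(c (γ.p t)).2| ≤ C2 :=
        le_trans (by simpa [Real.norm_eq_abs] using norm_snd_le (c (γ.p t))) h1
      rw [hggdef]
      simp only [Real.norm_eq_abs]
      calc |(c (γ.p t)).1 * (γ.d t).1 + (c (γ.p t)).2 * (γ.d t).2|
          ≤ |(c (γ.p t)).1 * (γ.d t).1| + |(c (γ.p t)).2 * (γ.d t).2| := abs_add_le _ _
        _ ≤ C2 * (γ.d t).1 + C2 * (γ.d t).2 := by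
            rw [abs_mul, abs_mul, abs_of_nonneg hp1, abs_of_nonneg hp2]
            exact add_le_add (mul_le_mul_of_nonneg_right hb1 hp1)
              (mul_le_mul_of_nonneg_right hb2 hp2)
  -- FTC
  have hFTC : ∫ t in (0:ℝ)..1, (w t - gg t) = φ 1 - φ 0 :=
    ftc_exc_s12 γ.exc_finite.toFinset zero_le_one hφc hder (hwint.sub hggint)
  have hφ1 : φ 1 = 0 := by
    rw [hφdef]; simp only; rw [hγ1]; simp
  have hφ0 : φ 0 = (∫ s in a.2..b.2, (c (a.1, s)).2) + ∫ u in a.1..b.1, (c (u, b.2)).1 := by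
    rw [hφdef]; simp only; rw [hγ0]
  -- pointwise nonnegativity of w
  have hW0 : ∀ t ∈ Ioo (0:ℝ) 1, t ∉ γ.exc → 0 ≤ w t := by
    intro t ht htexc
    rcases eq_or_lt_of_le hab1 with heq | hlt
    · have hconst : ∀ u ∈ Icc (0:ℝ) 1, (γ.p u).1 = a.1 := fun u hu =>
        le_antisymm (heq ▸ ((hγmem u hu).2).1) ((hγmem u hu).1.1)
      have hev : (fun u => (γ.p u).1) =ᶠ[nhds t] fun _ => a.1 := by
        have hIm : Icc (0:ℝ) 1 ∈ nhds t := Icc_mem_nhds ht.1 ht.2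
        filter_upwards [hIm] with u hu using hconst u hu
      have hder0 : HasDerivAt (fun u => (γ.p u).1) 0 t :=
        (hasDerivAt_const t a.1).congr_of_eventuallyEq hev
      have hz := (γ.deriv_fst t ⟨Ioo_subset_Icc_self ht, htexc⟩).unique hder0
      rw [hwdef]; simp only; rw [hz]; simp
    · have hWnn := hWK hlt (γ.p t) (hγmem t (Ioo_subset_Icc_self ht))
        (hup t (Ioo_subset_Icc_self ht))
      exact mul_nonneg hWnn (γ.d_fst_nonneg t (Ioo_subset_Icc_self ht))
  have hwnn : 0 ≤ ∫ t in (0:ℝ)..1, w t := by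
    refine intervalIntegral.integral_nonneg_of_ae_restrict zero_le_one ?_
    have hnull : volume (γ.exc ∪ ({0, 1} : Set ℝ)) = 0 :=
      Set.Finite.measure_zero (γ.exc_finite.union ((Set.finite_singleton 1).insert 0)) _
    filter_upwards [ae_restrict_mem measurableSet_Icc,
      ae_restrict_of_ae (measure_eq_zero_iff_ae_notMem.1 hnull)] with t htIcc htn
    have ht0 : t ≠ 0 := fun h => htn (by simp [h])
    have ht1 : t ≠ 1 := fun h => htn (by simp [h])
    have htexc : t ∉ γ.exc := fun h => htn (Or.inl h)
    exact hW0 t ⟨lt_of_le_of_ne htIcc.1 (Ne.symm ht0), lt_of_le_of_ne htIcc.2 ht1⟩ htexc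
  -- conclusion
  rw [intervalIntegral.integral_sub hwint hggint, hφ1, hφ0] at hFTC
  have hpc : pathCost c γ = ∫ t in (0:ℝ)..1, gg t := rfl
  rw [hpc]
  linarith
end
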